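/- Let (Q,R) be a gentle presentation and let m ≥ 2. If u is an irreducible cocycle in k(Γ_m∥B) of rank r > 1 that is not a coboundary, then: (1) m is even or the characteristic of k is 2; and (2) r divides m and there is a complete cycle C of length m and period r such that u is a nonzero scalar multiple of ⟨C⟩ = Σ_{i=0}^{r−1} (−1)^{im} (rot^i(C), s(rot^i(C))). -/

import Mathlib

/-!
Common framework: quivers, paths (as a start vertex together with a list of
composable arrows, listed in order of traversal, so that the paper's path
`c_m ⋯ c_1` corresponds to the list `[c_1, …, c_m]`), gentle and quadratic
monomial presentations, the cochain complex `k(Γ ∥ B)` and the chain complex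
`k(B ⊙ Γ)` of the paper.
-/

namespace GentleTT

structure Quiv where
  V : Type
  A : Type
  [fintV : Fintype V]
  [fintA : Fintype A]
  [decV : DecidableEq V]
  [decA : DecidableEq A]
  src : A → V
  tgt : A → V

attribute [instance] Quiv.fintV Quiv.fintA Quiv.decV Quiv.decA

/-- A "path datum": a start vertex together with the list of arrows traversed. -/
abbrev PathDat (Q : Quiv) := Q.V × List Q.A

def psrc (Q : Quiv) (p : PathDat Q) : Q.V := p.1

def ptgt (Q : Quiv) (p : PathDat Q) : Q.V := p.2.getLast?.elim p.1 Q.tgt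

def plen (Q : Quiv) (p : PathDat Q) : ℕ := p.2.length

/-- `p` is a genuine path: consecutive arrows compose, and the recorded start
vertex is the source of the first arrow (if any). -/
def Ok (Q : Quiv) (p : PathDat Q) : Prop :=
  p.2.Chain' (fun a b => Q.tgt a = Q.src b) ∧ ∀ a ∈ p.2.head?, Q.src a = p.1

/-- `p` is a path none of whose length-2 subpaths lies in `R`
(an element of the basis `B` of `kQ/⟨R⟩`). -/
def InB (Q : Quiv) (R : Set (Q.A × Q.A)) (p : PathDat Q) : Prop :=
  Ok Q p ∧ p.2.Chain' (fun a b => (a, b) ∉ R)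

/-- `p` is a path all of whose length-2 subpaths lie in `R` (an element of `Γ`). -/
def InG (Q : Quiv) (R : Set (Q.A × Q.A)) (p : PathDat Q) : Prop :=
  Ok Q p ∧ p.2.Chain' (fun a b => (a, b) ∈ R)

/-- Parallel paths: same source and same target. -/
def Par (Q : Quiv) (p q : PathDat Q) : Prop :=
  psrc Q p = psrc Q q ∧ ptgt Q p = ptgt Q q

/-- Antiparallel paths: `s(p) = t(q)` and `t(p) = s(q)`. -/
def AntiPar (Q : Quiv) (p q : PathDat Q) : Prop :=
  psrc Q p = ptgt Q q ∧ ptgt Q p = psrc Q q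

/-- A cycle: a path of positive length whose source equals its target. -/
def IsCycle (Q : Quiv) (p : PathDat Q) : Prop :=
  Ok Q p ∧ p.2 ≠ [] ∧ psrc Q p = ptgt Q p

/-- Rotation of a cycle: the paper's `rot (c_m ⋯ c_1) = c_{m-1} ⋯ c_1 c_m`
(the last arrow traversed becomes the first one traversed). -/
def rotP (Q : Quiv) (p : PathDat Q) : PathDat Q :=
  match p.2.getLast? with
  | none => p
  | some a => (Q.src a, a :: p.2.dropLast)

/-- Iterated rotation `rot^i`. -/
def rotI (Q : Quiv) (i : ℕ) (p : PathDat Q) : PathDat Q := (rotP Q)^[i] p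

def powL {α : Type} (l : List α) : ℕ → List α
  | 0 => []
  | n + 1 => l ++ powL l n

/-- The `n`-th power `p^n` of a (cyclic) path. -/
def powP (Q : Quiv) (p : PathDat Q) (n : ℕ) : PathDat Q := (p.1, powL p.2 n)

/-- A primitive cycle: a cycle that is not a proper power of another cycle. -/
def IsPrimitive (Q : Quiv) (p : PathDat Q) : Prop :=
  IsCycle Q p ∧ ∀ (q : PathDat Q) (n : ℕ), IsCycle Q q → 2 ≤ n → p ≠ powP Q q n

/-- The period of a cycle: the least `i ≥ 1` with `rot^i p = p`. -/
noncomputable def periodP (Q : Quiv) (p : PathDat Q) : ℕ :=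
  sInf {i : ℕ | 1 ≤ i ∧ rotI Q i p = p}

/-- Two cycles are conjugate (belong to the same circuit) if one is obtained
from the other by iterated rotation. -/
def RotEquiv (Q : Quiv) (p q : PathDat Q) : Prop := ∃ i : ℕ, rotI Q i p = q

/-- A cocomplete cycle: `p² ∈ B`. -/
def Cocomplete (Q : Quiv) (R : Set (Q.A × Q.A)) (p : PathDat Q) : Prop :=
  IsCycle Q p ∧ InB Q R (powP Q p 2)

/-- A complete cycle: `p² ∈ Γ`. -/
def Complete (Q : Quiv) (R : Set (Q.A × Q.A)) (p : PathDat Q) : Prop :=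
  IsCycle Q p ∧ InG Q R (powP Q p 2)

/-- `B`-maximal path: in `B` and not a proper subpath of another element of `B`. -/
def BMax (Q : Quiv) (R : Set (Q.A × Q.A)) (p : PathDat Q) : Prop :=
  InB Q R p ∧ ∀ q : PathDat Q, InB Q R q → p.2 <:+: q.2 → p.2 = q.2

/-- `Γ`-maximal path: in `Γ` and not a proper subpath of another element of `Γ`. -/
def GMax (Q : Quiv) (R : Set (Q.A × Q.A)) (p : PathDat Q) : Prop :=
  InG Q R p ∧ ∀ q : PathDat Q, InG Q R q → p.2 <:+: q.2 → p.2 = q.2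

def Adj (Q : Quiv) (v w : Q.V) : Prop :=
  ∃ a : Q.A, (Q.src a = v ∧ Q.tgt a = w) ∨ (Q.src a = w ∧ Q.tgt a = v)

/-- Connectedness of the underlying graph of the quiver. -/
def Connected (Q : Quiv) : Prop := ∀ v w : Q.V, Relation.ReflTransGen (Adj Q) v w

/-- A quadratic monomial presentation: the relations are paths of length 2. -/
def IsQuadMon (Q : Quiv) (R : Set (Q.A × Q.A)) : Prop :=
  ∀ r ∈ R, Q.tgt r.1 = Q.src r.2

/-- A gentle presentation. -/
structure IsGentle (Q : Quiv) (R : Set (Q.A × Q.A)) : Prop where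
  nonempty : Nonempty Q.V
  connected : Connected Q
  relComposable : ∀ r ∈ R, Q.tgt r.1 = Q.src r.2
  srcLe : ∀ v : Q.V, {a : Q.A | Q.src a = v}.ncard ≤ 2
  tgtLe : ∀ v : Q.V, {a : Q.A | Q.tgt a = v}.ncard ≤ 2
  uniqNotRelAfter : ∀ a : Q.A, {b : Q.A | Q.tgt a = Q.src b ∧ (a, b) ∉ R}.Subsingleton
  uniqNotRelBefore : ∀ a : Q.A, {c : Q.A | Q.tgt c = Q.src a ∧ (c, a) ∉ R}.Subsingleton
  uniqRelAfter : ∀ a : Q.A, {b : Q.A | Q.tgt a = Q.src b ∧ (a, b) ∈ R}.Subsingleton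
  uniqRelBefore : ∀ a : Q.A, {c : Q.A | Q.tgt c = Q.src a ∧ (c, a) ∈ R}.Subsingleton

/-- A spanning tree of the (finite, connected) quiver `Q`: a set of arrows
which connects all vertices and has exactly `|Q₀| - 1` elements. -/
def IsSpanningTree (Q : Quiv) (T : Set Q.A) : Prop :=
  (∀ v w : Q.V, Relation.ReflTransGen
      (fun x y => ∃ a ∈ T, (Q.src a = x ∧ Q.tgt a = y) ∨ (Q.src a = y ∧ Q.tgt a = x)) v w) ∧
  T.ncard + 1 = Fintype.card Q.V

/-- A set of representatives, one for each rotation class of cycles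
satisfying `Pred`. -/
def IsRepSet (Q : Quiv) (P : Set (PathDat Q)) (Pred : PathDat Q → Prop) : Prop :=
  (∀ p ∈ P, Pred p) ∧ ∀ q : PathDat Q, Pred q → ∃! p, p ∈ P ∧ RotEquiv Q q p

/-- `S` is a valid choice of the paper's set `Crep` for the predicate `Pred`
(e.g. cocompleteness, or completeness): it consists of all positive powers of a
chosen set of representatives of the rotation classes of primitive cycles
satisfying `Pred`. -/
def IsCrep (Q : Quiv) (S : Set (PathDat Q)) (Pred : PathDat Q → Prop) : Prop :=
  ∃ P : Set (PathDat Q),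
    IsRepSet Q P (fun p => IsPrimitive Q p ∧ Pred p) ∧
    S = {x | ∃ p ∈ P, ∃ n : ℕ, 1 ≤ n ∧ x = powP Q p n}

/-! ### The cochain complex `k(Γ ∥ B)` -/

/-- Membership in the degree-`m` basis `Γ_m ∥ B` of the cochain complex. -/
def GBmem (Q : Quiv) (R : Set (Q.A × Q.A)) (m : ℕ) (x : PathDat Q × PathDat Q) : Prop :=
  InG Q R x.1 ∧ plen Q x.1 = m ∧ InB Q R x.2 ∧ Par Q x.1 x.2

abbrev GB (Q : Quiv) (R : Set (Q.A × Q.A)) (m : ℕ) :=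
  {x : PathDat Q × PathDat Q // GBmem Q R m x}

/-- The degree-`m` component of the cochain complex `k(Γ ∥ B)`. -/
abbrev Coch (k : Type) [Field k] (Q : Quiv) (R : Set (Q.A × Q.A)) (m : ℕ) :=
  GB Q R m →₀ k

/-- The basis vector of `k(Γ_m ∥ B)` attached to a raw pair of path data
(and `0` if the pair is not in `Γ_m ∥ B`). -/
noncomputable def bv (k : Type) [Field k] (Q : Quiv) (R : Set (Q.A × Q.A)) (m : ℕ)
    (x : PathDat Q × PathDat Q) : Coch k Q R m := by
  classical
  exact if h : GBmem Q R m x then Finsupp.single (⟨x, h⟩ : GB Q R m) (1 : k) else 0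

/-- Extension on the left (in the paper's notation): `p ↦ b p`. -/
def extL (Q : Quiv) (b : Q.A) (p : PathDat Q) : PathDat Q := (p.1, p.2 ++ [b])

/-- Extension on the right (in the paper's notation): `p ↦ p a`. -/
def extR (Q : Quiv) (a : Q.A) (p : PathDat Q) : PathDat Q := (Q.src a, a :: p.2)

/-- The differential on a basis element:
`d^m (γ, α) = Σ_b (bγ, bα) - (-1)^m Σ_a (γa, αa)`. -/
noncomputable def dB (k : Type) [Field k] (Q : Quiv) (R : Set (Q.A × Q.A)) (m : ℕ)
    (x : GB Q R m) : Coch k Q R (m + 1) := by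
  classical
  exact
    (∑ b : Q.A,
      if h : GBmem Q R (m + 1) (extL Q b x.val.1, extL Q b x.val.2) then
        Finsupp.single (⟨_, h⟩ : GB Q R (m + 1)) (1 : k) else 0)
    - ((-1 : k) ^ m) •
      (∑ a : Q.A,
        if h : Q.tgt a = psrc Q x.val.1 ∧
            GBmem Q R (m + 1) (extR Q a x.val.1, extR Q a x.val.2) then
          Finsupp.single (⟨_, h.2⟩ : GB Q R (m + 1)) (1 : k) else 0)

/-- The differential `d^m : k(Γ_m ∥ B) → k(Γ_{m+1} ∥ B)`. -/
noncomputable def dLin (k : Type) [Field k] (Q : Quiv) (R : Set (Q.A × Q.A)) (m : ℕ) :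
    Coch k Q R m →ₗ[k] Coch k Q R (m + 1) :=
  Finsupp.linearCombination k (dB k Q R m)

/-- The element `𝟙 = Σ_{i ∈ Q₀} (e_i, e_i)` (placed in degree `m`; it is the
intended element when `m = 0`). -/
noncomputable def oneD (k : Type) [Field k] (Q : Quiv) (R : Set (Q.A × Q.A)) (m : ℕ) :
    Coch k Q R m :=
  ∑ i : Q.V, bv k Q R m ((i, []), (i, []))

/-- `⟨α⟩ = Σ_{i=0}^{r-1} (s(rot^i α), rot^i α)`, `r` the period of `α`. -/
noncomputable def cycB (k : Type) [Field k] (Q : Quiv) (R : Set (Q.A × Q.A)) (m : ℕ)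
    (α : PathDat Q) : Coch k Q R m :=
  ∑ i ∈ Finset.range (periodP Q α),
    bv k Q R m ((psrc Q (rotI Q i α), []), rotI Q i α)

/-- `⟨C⟩ = Σ_{i=0}^{r-1} (-1)^{i m} (rot^i C, s(rot^i C))`, `r` the period of `C`. -/
noncomputable def cycG (k : Type) [Field k] (Q : Quiv) (R : Set (Q.A × Q.A)) (m : ℕ)
    (C : PathDat Q) : Coch k Q R m :=
  ∑ i ∈ Finset.range (periodP Q C),
    ((-1 : k) ^ (i * m)) • bv k Q R m (rotI Q i C, (psrc Q (rotI Q i C), []))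

/-- The coboundary subspace in degree `m` (zero in degree `0`). -/
noncomputable def cobSp (k : Type) [Field k] (Q : Quiv) (R : Set (Q.A × Q.A)) :
    (m : ℕ) → Submodule k (Coch k Q R m)
  | 0 => ⊥
  | m + 1 => LinearMap.range (dLin k Q R m)

/-- The cocycle subspace in degree `m`. -/
noncomputable def cocSp (k : Type) [Field k] (Q : Quiv) (R : Set (Q.A × Q.A)) (m : ℕ) :
    Submodule k (Coch k Q R m) :=
  LinearMap.ker (dLin k Q R m)

/-- The degree-`m` cohomology `HH^m` of the complex `k(Γ ∥ B)` vanishes: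
every cocycle is a coboundary. -/
def CohomIsZero (k : Type) [Field k] (Q : Quiv) (R : Set (Q.A × Q.A)) (m : ℕ) : Prop :=
  cocSp k Q R m ≤ cobSp k Q R m

/-- The degree-`m` cohomology `HH^m` of the complex `k(Γ ∥ B)` is
finite-dimensional: there is a finite set of cocycles whose classes span it. -/
def CohomFinDim (k : Type) [Field k] (Q : Quiv) (R : Set (Q.A × Q.A)) (m : ℕ) : Prop :=
  ∃ G : Finset (Coch k Q R m), ↑G ⊆ (cocSp k Q R m : Set (Coch k Q R m)) ∧
    cocSp k Q R m ≤ cobSp k Q R m ⊔ Submodule.span k ↑G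

/-- The degree-`m` cohomology `HH^m` of the complex `k(Γ ∥ B)` has dimension at
most `n`: there are `n` cocycles whose classes span it. -/
def CohomDimLe (k : Type) [Field k] (Q : Quiv) (R : Set (Q.A × Q.A)) (m n : ℕ) : Prop :=
  ∃ G : Finset (Coch k Q R m), G.card ≤ n ∧
    ↑G ⊆ (cocSp k Q R m : Set (Coch k Q R m)) ∧
    cocSp k Q R m ≤ cobSp k Q R m ⊔ Submodule.span k ↑G

/-- `Gen` is a basis of the kernel of `d⁰`, i.e. it freely generates `HH⁰`. -/
def FreelyGeneratesKer0 (k : Type) [Field k] (Q : Quiv) (R : Set (Q.A × Q.A))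
    (Gen : Set (Coch k Q R 0)) : Prop :=
  (∀ x ∈ Gen, dLin k Q R 0 x = 0) ∧
  (∀ z : Coch k Q R 0, dLin k Q R 0 z = 0 → z ∈ Submodule.span k Gen) ∧
  LinearIndependent k (fun x : Gen => (x : Coch k Q R 0))

/-- The cohomology classes of the elements of `Gen` freely generate the
degree-`(m+1)` cohomology of `k(Γ ∥ B)`: all elements of `Gen` are cocycles,
every cocycle is congruent to an element of their span modulo coboundaries, no
nonzero element of their span is a coboundary, and `Gen` is linearly
independent. -/
def FreelyGeneratesCohom (k : Type) [Field k] (Q : Quiv) (R : Set (Q.A × Q.A)) (m : ℕ)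
    (Gen : Set (Coch k Q R (m + 1))) : Prop :=
  (∀ x ∈ Gen, dLin k Q R (m + 1) x = 0) ∧
  (∀ z : Coch k Q R (m + 1), dLin k Q R (m + 1) z = 0 →
      ∃ y : Coch k Q R m, z - dLin k Q R m y ∈ Submodule.span k Gen) ∧
  (∀ x ∈ Submodule.span k Gen, x ∈ LinearMap.range (dLin k Q R m) → x = 0) ∧
  LinearIndependent k (fun x : Gen => (x : Coch k Q R (m + 1)))

/-! ### The chain complex `k(B ⊙ Γ)` -/

/-- Membership in the degree-`m` basis `B ⊙ Γ_m` of the chain complex. -/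
def BGmem (Q : Quiv) (R : Set (Q.A × Q.A)) (m : ℕ) (x : PathDat Q × PathDat Q) : Prop :=
  InB Q R x.1 ∧ InG Q R x.2 ∧ plen Q x.2 = m ∧ AntiPar Q x.1 x.2

abbrev BGt (Q : Quiv) (R : Set (Q.A × Q.A)) (m : ℕ) :=
  {x : PathDat Q × PathDat Q // BGmem Q R m x}

/-- The degree-`m` component of the chain complex `k(B ⊙ Γ)`. -/
abbrev Chn (k : Type) [Field k] (Q : Quiv) (R : Set (Q.A × Q.A)) (m : ℕ) :=
  BGt Q R m →₀ k

/-- The basis vector of `k(B ⊙ Γ_m)` attached to a raw pair of path data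
(and `0` if the pair is not in `B ⊙ Γ_m`). -/
noncomputable def bw (k : Type) [Field k] (Q : Quiv) (R : Set (Q.A × Q.A)) (m : ℕ)
    (x : PathDat Q × PathDat Q) : Chn k Q R m := by
  classical
  exact if h : BGmem Q R m x then Finsupp.single (⟨x, h⟩ : BGt Q R m) (1 : k) else 0

/-- `l1(p)`: the last arrow of `p` (as a path of length one). -/
def l1P (Q : Quiv) (p : PathDat Q) : PathDat Q :=
  match p.2.getLast? with
  | none => p
  | some a => (Q.src a, [a])

/-- `l2(p)`: `p` with its last arrow removed. -/
def l2P (Q : Quiv) (p : PathDat Q) : PathDat Q := (p.1, p.2.dropLast)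

/-- `r1(p)`: `p` with its first arrow removed. -/
def r1P (Q : Quiv) (p : PathDat Q) : PathDat Q :=
  match p.2 with
  | [] => p
  | a :: l => (Q.tgt a, l)

/-- `r2(p)`: the first arrow of `p` (as a path of length one). -/
def r2P (Q : Quiv) (p : PathDat Q) : PathDat Q :=
  match p.2 with
  | [] => p
  | a :: _ => (Q.src a, [a])

/-- The raw first term `(α·l1(γ), l2(γ))` of the boundary of `(α, γ)`. -/
def d1raw (Q : Quiv) (x : PathDat Q × PathDat Q) : PathDat Q × PathDat Q :=
  match x.2.2.getLast? with
  | none => x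
  | some a => ((Q.src a, a :: x.1.2), (x.2.1, x.2.2.dropLast))

/-- The raw second term `(r2(γ)·α, r1(γ))` of the boundary of `(α, γ)`. -/
def d2raw (Q : Quiv) (x : PathDat Q × PathDat Q) : PathDat Q × PathDat Q :=
  match x.2.2 with
  | [] => x
  | c :: l => ((x.1.1, x.1.2 ++ [c]), (Q.tgt c, l))

/-- The boundary of a basis element:
`d_m (α, γ) = (α·l1(γ), l2(γ)) + (-1)^m (r2(γ)·α, r1(γ))` (in degree `m = m+1`),
where pairs whose first component is not in `B` are interpreted as `0`. -/
noncomputable def bdB (k : Type) [Field k] (Q : Quiv) (R : Set (Q.A × Q.A)) (m : ℕ)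
    (x : BGt Q R (m + 1)) : Chn k Q R m :=
  bw k Q R m (d1raw Q x.val) + ((-1 : k) ^ (m + 1)) • bw k Q R m (d2raw Q x.val)

/-- The boundary map `d_{m+1} : k(B ⊙ Γ_{m+1}) → k(B ⊙ Γ_m)`. -/
noncomputable def bd (k : Type) [Field k] (Q : Quiv) (R : Set (Q.A × Q.A)) (m : ℕ) :
    Chn k Q R (m + 1) →ₗ[k] Chn k Q R m :=
  Finsupp.linearCombination k (bdB k Q R m)

/-- The subspace of cycles in degree `m` (everything in degree `0`). -/
noncomputable def ZSp (k : Type) [Field k] (Q : Quiv) (R : Set (Q.A × Q.A)) :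
    (m : ℕ) → Submodule k (Chn k Q R m)
  | 0 => ⊤
  | m + 1 => LinearMap.ker (bd k Q R m)

/-- The subspace of boundaries in degree `m`. -/
noncomputable def BSp (k : Type) [Field k] (Q : Quiv) (R : Set (Q.A × Q.A)) (m : ℕ) :
    Submodule k (Chn k Q R m) :=
  LinearMap.range (bd k Q R m)

/-- The degree-`m` homology `HH_m` of the complex `k(B ⊙ Γ)` vanishes:
every cycle is a boundary. -/
def HomIsZero (k : Type) [Field k] (Q : Quiv) (R : Set (Q.A × Q.A)) (m : ℕ) : Prop :=
  ZSp k Q R m ≤ BSp k Q R m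

/-- The degree-`m` homology `HH_m` of the complex `k(B ⊙ Γ)` is
finite-dimensional: there is a finite set of cycles whose classes span it. -/
def HomFinDim (k : Type) [Field k] (Q : Quiv) (R : Set (Q.A × Q.A)) (m : ℕ) : Prop :=
  ∃ G : Finset (Chn k Q R m), ↑G ⊆ (ZSp k Q R m : Set (Chn k Q R m)) ∧
    ZSp k Q R m ≤ BSp k Q R m ⊔ Submodule.span k ↑G

/-- The concatenation `α γ` of an antiparallel pair (a cycle, or a trivial path). -/
def concatP (Q : Quiv) (x : PathDat Q × PathDat Q) : PathDat Q := (x.2.1, x.2.2 ++ x.1.2)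

/-- The degree-`m` component of the subcomplex `k(B ⊙ Γ)_C`, spanned by the
basis elements whose concatenation lies in the circuit (rotation class) of `c`. -/
noncomputable def Wsp (k : Type) [Field k] (Q : Quiv) (R : Set (Q.A × Q.A))
    (c : PathDat Q) (m : ℕ) : Submodule k (Chn k Q R m) :=
  Submodule.span k {z : Chn k Q R m |
    ∃ x : BGt Q R m, RotEquiv Q (concatP Q x.val) c ∧ z = Finsupp.single x (1 : k)}

/-- The boundaries of the subcomplex `k(B ⊙ Γ)_C` in degree `m`. -/
noncomputable def WB (k : Type) [Field k] (Q : Quiv) (R : Set (Q.A × Q.A))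
    (c : PathDat Q) (m : ℕ) : Submodule k (Chn k Q R m) :=
  Submodule.map (bd k Q R m) (Wsp k Q R c (m + 1))

/-- The cycles of the subcomplex `k(B ⊙ Γ)_C` in degree `m`. -/
noncomputable def WZ (k : Type) [Field k] (Q : Quiv) (R : Set (Q.A × Q.A))
    (c : PathDat Q) (m : ℕ) : Submodule k (Chn k Q R m) :=
  ZSp k Q R m ⊓ Wsp k Q R c m

/-- The degree-`m` homology of `k(B ⊙ Γ)_C` is one-dimensional, spanned by the
homology class of `v`. -/
def SubHomSpannedBy (k : Type) [Field k] (Q : Quiv) (R : Set (Q.A × Q.A))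
    (c : PathDat Q) (m : ℕ) (v : Chn k Q R m) : Prop :=
  v ∈ WZ k Q R c m ∧ v ∉ WB k Q R c m ∧
  ∀ z ∈ WZ k Q R c m, ∃ t : k, z - t • v ∈ WB k Q R c m

/-- `ĥ(c) = Σ_{i=0}^{r-1} (r1(rot^i c), r2(rot^i c))` (degree 1, for cocomplete cycles;
placed in degree `m`). -/
noncomputable def hCycR (k : Type) [Field k] (Q : Quiv) (R : Set (Q.A × Q.A)) (m : ℕ)
    (c : PathDat Q) : Chn k Q R m :=
  ∑ i ∈ Finset.range (periodP Q c),
    bw k Q R m (r1P Q (rotI Q i c), r2P Q (rotI Q i c))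

/-- `ĥ(c) = Σ_{i=0}^{r-1} (-1)^{(m+1) i} (s(rot^i c), rot^i c)` (degree `m`, for
complete cycles of length `m`). -/
noncomputable def hCycM (k : Type) [Field k] (Q : Quiv) (R : Set (Q.A × Q.A)) (m : ℕ)
    (c : PathDat Q) : Chn k Q R m :=
  ∑ i ∈ Finset.range (periodP Q c),
    ((-1 : k) ^ ((m + 1) * i)) • bw k Q R m ((psrc Q (rotI Q i c), []), rotI Q i c)

/-- The homology classes of the elements of `Gen` freely generate the degree-`m`
homology of `k(B ⊙ Γ)`. -/
def FreelyGeneratesHom (k : Type) [Field k] (Q : Quiv) (R : Set (Q.A × Q.A)) (m : ℕ)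
    (Gen : Set (Chn k Q R m)) : Prop :=
  (∀ x ∈ Gen, x ∈ ZSp k Q R m) ∧
  (∀ z ∈ ZSp k Q R m, ∃ y : Chn k Q R (m + 1), z - bd k Q R m y ∈ Submodule.span k Gen) ∧
  (∀ x ∈ Submodule.span k Gen, x ∈ LinearMap.range (bd k Q R m) → x = 0) ∧
  LinearIndependent k (fun x : Gen => (x : Chn k Q R m))

/-- An irreducible cocycle: a cocycle that is not the sum of two nonzero
disjoint cocycles (disjoint = no common basis element in their supports). -/
def IsIrreducibleCocycle (k : Type) [Field k] (Q : Quiv) (R : Set (Q.A × Q.A))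
    (m : ℕ) (u : Coch k Q R m) : Prop :=
  dLin k Q R m u = 0 ∧
  ¬∃ v w : Coch k Q R m, v ≠ 0 ∧ w ≠ 0 ∧ dLin k Q R m v = 0 ∧ dLin k Q R m w = 0 ∧
      Disjoint v.support w.support ∧ u = v + w

section Aux
open scoped Classical
variable {k : Type} [Field k] {Q : Quiv} {R : Set (Q.A × Q.A)}

/-- `y` is the left extension of `x` by some arrow. -/
def LinkL (Q : Quiv) (R : Set (Q.A × Q.A)) (m : ℕ) (x : GB Q R m) (y : GB Q R (m+1)) : Prop :=
  ∃ b : Q.A, y.val = (extL Q b x.val.1, extL Q b x.val.2)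

/-- `y` is the right extension of `x` by some arrow. -/
def LinkR (Q : Quiv) (R : Set (Q.A × Q.A)) (m : ℕ) (x : GB Q R m) (y : GB Q R (m+1)) : Prop :=
  ∃ a : Q.A, Q.tgt a = psrc Q x.val.1 ∧
    y.val = (extR Q a x.val.1, extR Q a x.val.2)

lemma sum_ite_exists {β : Type} [Fintype β] (C : β → Prop) [DecidablePred C]
    (hu : ∀ b₁ b₂, C b₁ → C b₂ → b₁ = b₂) :
    (∑ b : β, if C b then (1:k) else 0) = if ∃ b, C b then 1 else 0 := by
  by_cases h : ∃ b, C b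
  · obtain ⟨b₀, hb₀⟩ := h
    rw [if_pos ⟨b₀, hb₀⟩, Finset.sum_eq_single b₀]
    · simp [hb₀]
    · intro b _ hbne; exact if_neg (fun hc => hbne (hu b b₀ hc hb₀))
    · simp
  · rw [if_neg h]; exact Finset.sum_eq_zero (fun b _ => if_neg (fun hc => h ⟨b, hc⟩))

lemma dB_apply (m : ℕ) (x : GB Q R m) (y : GB Q R (m+1)) :
    dB k Q R m x y =
      (if LinkL Q R m x y then (1:k) else 0)
      - (-1 : k) ^ m * (if LinkR Q R m x y then 1 else 0) := by
  classical
  unfold dB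
  rw [Finsupp.sub_apply, Finsupp.smul_apply, Finsupp.finset_sum_apply,
    Finsupp.finset_sum_apply, smul_eq_mul]
  have hL : ∀ b : Q.A,
      (if h : GBmem Q R (m+1) (extL Q b x.val.1, extL Q b x.val.2) then
        Finsupp.single (⟨_, h⟩ : GB Q R (m+1)) (1 : k) else 0) y
      = if y.val = (extL Q b x.val.1, extL Q b x.val.2) then (1:k) else 0 := by
    intro b
    by_cases hm : GBmem Q R (m+1) (extL Q b x.val.1, extL Q b x.val.2)
    · rw [dif_pos hm, Finsupp.single_apply]
      simp [Subtype.ext_iff, eq_comm]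
    · rw [dif_neg hm, if_neg, Finsupp.coe_zero, Pi.zero_apply]
      intro he; exact hm (he ▸ y.2)
  have hR : ∀ a : Q.A,
      (if h : Q.tgt a = psrc Q x.val.1 ∧
          GBmem Q R (m+1) (extR Q a x.val.1, extR Q a x.val.2) then
        Finsupp.single (⟨_, h.2⟩ : GB Q R (m+1)) (1 : k) else 0) y
      = if (Q.tgt a = psrc Q x.val.1 ∧
          y.val = (extR Q a x.val.1, extR Q a x.val.2)) then (1:k) else 0 := by
    intro a
    by_cases hm : Q.tgt a = psrc Q x.val.1 ∧
        GBmem Q R (m+1) (extR Q a x.val.1, extR Q a x.val.2)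
    · rw [dif_pos hm, Finsupp.single_apply]
      simp [Subtype.ext_iff, eq_comm, hm.1]
    · rw [dif_neg hm, if_neg, Finsupp.coe_zero, Pi.zero_apply]
      rintro ⟨ht, he⟩; exact hm ⟨ht, he ▸ y.2⟩
  rw [Finset.sum_congr rfl (fun b _ => hL b), Finset.sum_congr rfl (fun a _ => hR a)]
  rw [sum_ite_exists (k := k) _ ?_, sum_ite_exists (k := k) _ ?_]
  · simp only [LinkL, LinkR]; congr
  · rintro a₁ a₂ ⟨-, h₁⟩ ⟨-, h₂⟩
    have h0 := h₁.symm.trans h₂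
    have h3 := congrArg Prod.fst h0
    have h4 : a₁ :: x.val.1.2 = a₂ :: x.val.1.2 := congrArg Prod.snd h3
    exact (List.cons.injEq _ _ _ _ ▸ h4).1
  · intro b₁ b₂ h₁ h₂
    have h0 := h₁.symm.trans h₂
    have h3 := congrArg Prod.fst h0
    have h4 : x.val.1.2 ++ [b₁] = x.val.1.2 ++ [b₂] := congrArg Prod.snd h3
    have := List.append_cancel_left h4
    simpa using this

lemma dLin_apply (m : ℕ) (u : Coch k Q R m) (y : GB Q R (m+1)) :
    dLin k Q R m u y = ∑ x ∈ u.support, u x *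
      ((if LinkL Q R m x y then (1:k) else 0)
        - (-1 : k) ^ m * (if LinkR Q R m x y then 1 else 0)) := by
  classical
  unfold dLin
  rw [Finsupp.linearCombination_apply, Finsupp.sum, Finsupp.finset_sum_apply]
  exact Finset.sum_congr rfl fun x _ => by rw [Finsupp.smul_apply, dB_apply, smul_eq_mul]

end Aux
section Aux2
open scoped Classical
variable {k : Type} [Field k] {Q : Quiv} {R : Set (Q.A × Q.A)}

lemma gamma_ne_nil {m : ℕ} (hm : 0 < m) (x : GB Q R m) : x.val.1.2 ≠ [] := by
  have h := x.2.2.1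
  intro he
  rw [plen, he] at h; simp at h; omega

lemma fst_eq_src_head {p : PathDat Q} (hOk : Ok Q p) {c : Q.A} {t : List Q.A}
    (h : p.2 = c :: t) : p.1 = Q.src c :=
  (hOk.2 c (by rw [h]; rfl)).symm

lemma uniqL {m : ℕ} {x₁ x₂ : GB Q R m} {y : GB Q R (m+1)}
    (h₁ : LinkL Q R m x₁ y) (h₂ : LinkL Q R m x₂ y) : x₁ = x₂ := by
  obtain ⟨b₁, e₁⟩ := h₁; obtain ⟨b₂, e₂⟩ := h₂
  have h0 := e₁.symm.trans e₂
  simp only [extL, Prod.mk.injEq] at h0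
  obtain ⟨⟨hγ1, hγ2⟩, hα1, hα2⟩ := h0
  have hlen : x₁.val.1.2.length = x₂.val.1.2.length := by
    have l1 := x₁.2.2.1; have l2 := x₂.2.2.1
    rw [plen] at l1 l2; rw [l1, l2]
  obtain ⟨hg, hb⟩ := List.append_inj hγ2 hlen
  have hb' : b₁ = b₂ := by simpa using hb
  rw [hb'] at hα2
  have ha := List.append_cancel_right hα2
  apply Subtype.ext
  exact Prod.ext (Prod.ext hγ1 hg) (Prod.ext hα1 ha)

lemma uniqR {m : ℕ} (hm : 0 < m) {x₁ x₂ : GB Q R m} {y : GB Q R (m+1)}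
    (h₁ : LinkR Q R m x₁ y) (h₂ : LinkR Q R m x₂ y) : x₁ = x₂ := by
  obtain ⟨a₁, -, e₁⟩ := h₁; obtain ⟨a₂, -, e₂⟩ := h₂
  have h0 := e₁.symm.trans e₂
  simp only [extR, Prod.mk.injEq, List.cons.injEq] at h0
  obtain ⟨⟨-, ha, hg⟩, -, -, hal⟩ := h0
  obtain ⟨c, t, hct⟩ := List.exists_cons_of_ne_nil (gamma_ne_nil hm x₁)
  have hv1 : x₁.val.1.1 = Q.src c := fst_eq_src_head x₁.2.1.1 hct
  have hv2 : x₂.val.1.1 = Q.src c := fst_eq_src_head x₂.2.1.1 (hg ▸ hct)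
  have hγ1 : x₁.val.1.1 = x₂.val.1.1 := hv1.trans hv2.symm
  have hα1 : x₁.val.2.1 = x₂.val.2.1 := by
    have p1 := x₁.2.2.2.2.1; have p2 := x₂.2.2.2.2.1
    rw [psrc, psrc] at p1 p2
    rw [← p1, ← p2, hγ1]
  apply Subtype.ext
  exact Prod.ext (Prod.ext hγ1 hg) (Prod.ext hα1 hal)

lemma cancel_L {m : ℕ} (hm : 0 < m) {u : Coch k Q R m} (hdu : dLin k Q R m u = 0)
    {x : GB Q R m} (hx : x ∈ u.support) {y : GB Q R (m+1)} (hL : LinkL Q R m x y) :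
    ∃ x', x' ∈ u.support ∧ LinkR Q R m x' y ∧ u x = (-1:k)^m * u x' := by
  have h0 : dLin k Q R m u y = 0 := by rw [hdu]; rfl
  rw [dLin_apply] at h0
  have hsplit : ∀ x' ∈ u.support, u x' *
      ((if LinkL Q R m x' y then (1:k) else 0)
        - (-1:k)^m * (if LinkR Q R m x' y then 1 else 0))
      = u x' * (if LinkL Q R m x' y then (1:k) else 0)
        - (-1:k)^m * (u x' * (if LinkR Q R m x' y then 1 else 0)) := by
    intro x' _; ring
  rw [Finset.sum_congr rfl hsplit, Finset.sum_sub_distrib, ← Finset.mul_sum] at h0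
  have hS1 : (∑ x' ∈ u.support, u x' * (if LinkL Q R m x' y then (1:k) else 0)) = u x := by
    rw [Finset.sum_eq_single x]
    · rw [if_pos hL, mul_one]
    · intro x'' _ hne
      rw [if_neg (fun hc => hne (uniqL hc hL)), mul_zero]
    · intro hxx; exact absurd hx hxx
  rw [hS1] at h0
  by_cases hex : ∃ x' ∈ u.support, LinkR Q R m x' y
  · obtain ⟨x', hx', hR⟩ := hex
    have hS2 : (∑ x'' ∈ u.support, u x'' * (if LinkR Q R m x'' y then (1:k) else 0)) = u x' := by
      rw [Finset.sum_eq_single x']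
      · rw [if_pos hR, mul_one]
      · intro x'' _ hne
        rw [if_neg (fun hc => hne (uniqR hm hc hR)), mul_zero]
      · intro hxx; exact absurd hx' hxx
    rw [hS2] at h0
    exact ⟨x', hx', hR, sub_eq_zero.1 h0⟩
  · have hS2 : (∑ x'' ∈ u.support, u x'' * (if LinkR Q R m x'' y then (1:k) else 0)) = 0 := by
      apply Finset.sum_eq_zero
      intro x'' hx''
      rw [if_neg (fun hc => hex ⟨x'', hx'', hc⟩), mul_zero]
    rw [hS2, mul_zero, sub_zero] at h0
    exact absurd h0 (Finsupp.mem_support_iff.1 hx)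

lemma cancel_R {m : ℕ} (hm : 0 < m) {u : Coch k Q R m} (hdu : dLin k Q R m u = 0)
    {x : GB Q R m} (hx : x ∈ u.support) {y : GB Q R (m+1)} (hR : LinkR Q R m x y) :
    ∃ x', x' ∈ u.support ∧ LinkL Q R m x' y ∧ u x' = (-1:k)^m * u x := by
  have h0 : dLin k Q R m u y = 0 := by rw [hdu]; rfl
  rw [dLin_apply] at h0
  have hsplit : ∀ x' ∈ u.support, u x' *
      ((if LinkL Q R m x' y then (1:k) else 0)
        - (-1:k)^m * (if LinkR Q R m x' y then 1 else 0))
      = u x' * (if LinkL Q R m x' y then (1:k) else 0)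
        - (-1:k)^m * (u x' * (if LinkR Q R m x' y then 1 else 0)) := by
    intro x' _; ring
  rw [Finset.sum_congr rfl hsplit, Finset.sum_sub_distrib, ← Finset.mul_sum] at h0
  have hS2 : (∑ x'' ∈ u.support, u x'' * (if LinkR Q R m x'' y then (1:k) else 0)) = u x := by
    rw [Finset.sum_eq_single x]
    · rw [if_pos hR, mul_one]
    · intro x'' _ hne
      rw [if_neg (fun hc => hne (uniqR hm hc hR)), mul_zero]
    · intro hxx; exact absurd hx hxx
  rw [hS2] at h0
  by_cases hex : ∃ x' ∈ u.support, LinkL Q R m x' y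
  · obtain ⟨x', hx', hL⟩ := hex
    have hS1 : (∑ x'' ∈ u.support, u x'' * (if LinkL Q R m x'' y then (1:k) else 0)) = u x' := by
      rw [Finset.sum_eq_single x']
      · rw [if_pos hL, mul_one]
      · intro x'' _ hne
        rw [if_neg (fun hc => hne (uniqL hc hL)), mul_zero]
      · intro hxx; exact absurd hx' hxx
    rw [hS1] at h0
    exact ⟨x', hx', hL, sub_eq_zero.1 h0⟩
  · have hS1 : (∑ x'' ∈ u.support, u x'' * (if LinkL Q R m x'' y then (1:k) else 0)) = 0 := by
      apply Finset.sum_eq_zero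
      intro x'' hx''
      rw [if_neg (fun hc => hex ⟨x'', hx'', hc⟩), mul_zero]
    rw [hS1, zero_sub, neg_eq_zero] at h0
    have : u x = 0 := by
      have hne : ((-1:k)^m) ≠ 0 := by
        apply pow_ne_zero; norm_num
      exact (mul_eq_zero.1 h0).resolve_left hne
    exact absurd this (Finsupp.mem_support_iff.1 hx)

end Aux2
section Aux3
open scoped Classical
variable {k : Type} [Field k] {Q : Quiv} {R : Set (Q.A × Q.A)}

lemma irred_closed {m : ℕ} (hm : 0 < m) {u : Coch k Q R m}
    (hirr : IsIrreducibleCocycle k Q R m u)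
    (T : Finset (GB Q R m)) (hTsub : T ⊆ u.support) (hTne : T.Nonempty)
    (hclosed : ∀ x ∈ T, ∀ x' ∈ u.support, ∀ y : GB Q R (m+1),
      (LinkL Q R m x y ∧ LinkR Q R m x' y) ∨ (LinkL Q R m x' y ∧ LinkR Q R m x y) →
        x' ∈ T) :
    T = u.support := by
  by_contra hne
  have hdu := hirr.1
  set v : Coch k Q R m := u.filter (· ∈ T) with hv
  have hvx : ∀ x ∈ T, v x = u x := fun x hx => Finsupp.filter_apply_pos _ u hx
  have hvx' : ∀ x, x ∉ T → v x = 0 := fun x hx => Finsupp.filter_apply_neg _ u hx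
  have hvsupp : v.support = T := by
    ext x
    rw [hv, Finsupp.support_filter, Finset.mem_filter]
    exact ⟨fun h => h.2, fun h => ⟨hTsub h, h⟩⟩
  have hdv : dLin k Q R m v = 0 := by
    ext y
    rw [dLin_apply, hvsupp, Finsupp.coe_zero, Pi.zero_apply]
    by_cases ha : ∃ x ∈ T, LinkL Q R m x y
    · obtain ⟨xT, hxT, hLT⟩ := ha
      obtain ⟨xR, hxR, hRR, hrel⟩ := cancel_L hm hdu (hTsub hxT) hLT
      have hxRT : xR ∈ T := hclosed xT hxT xR hxR y (Or.inl ⟨hLT, hRR⟩)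
      have hS1 : (∑ x ∈ T, v x * (if LinkL Q R m x y then (1:k) else 0)) = u xT := by
        rw [Finset.sum_eq_single xT]
        · rw [if_pos hLT, mul_one, hvx xT hxT]
        · intro x'' _ hne'; rw [if_neg (fun hc => hne' (uniqL hc hLT)), mul_zero]
        · intro h; exact absurd hxT h
      have hS2 : (∑ x ∈ T, v x * (if LinkR Q R m x y then (1:k) else 0)) = u xR := by
        rw [Finset.sum_eq_single xR]
        · rw [if_pos hRR, mul_one, hvx xR hxRT]
        · intro x'' _ hne'; rw [if_neg (fun hc => hne' (uniqR hm hc hRR)), mul_zero]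
        · intro h; exact absurd hxRT h
      have hsplit : ∀ x ∈ T, v x *
          ((if LinkL Q R m x y then (1:k) else 0)
            - (-1:k)^m * (if LinkR Q R m x y then 1 else 0))
          = v x * (if LinkL Q R m x y then (1:k) else 0)
            - (-1:k)^m * (v x * (if LinkR Q R m x y then 1 else 0)) := by
        intro x _; ring
      rw [Finset.sum_congr rfl hsplit, Finset.sum_sub_distrib, ← Finset.mul_sum,
        hS1, hS2, hrel, sub_self]
    · apply Finset.sum_eq_zero
      intro x hx
      have hL0 : (if LinkL Q R m x y then (1:k) else 0) = 0 :=
        if_neg (fun hc => ha ⟨x, hx, hc⟩)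
      have hR0 : (if LinkR Q R m x y then (1:k) else 0) = 0 := by
        apply if_neg
        intro hc
        obtain ⟨xL, hxL, hLL, -⟩ := cancel_R hm hdu (hTsub hx) hc
        have : xL ∈ T := hclosed x hx xL hxL y (Or.inr ⟨hLL, hc⟩)
        exact ha ⟨xL, this, hLL⟩
      rw [hL0, hR0, mul_zero, sub_zero, mul_zero]
  set w : Coch k Q R m := u - v with hw
  have hwx : ∀ x, x ∈ T → w x = 0 := by
    intro x hx; rw [hw, Finsupp.sub_apply, hvx x hx, sub_self]
  have hwx' : ∀ x, x ∉ T → w x = u x := by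
    intro x hx; rw [hw, Finsupp.sub_apply, hvx' x hx, sub_zero]
  obtain ⟨x₀, hx₀⟩ := hTne
  have hvne : v ≠ 0 := by
    intro h
    have := hvx x₀ hx₀
    rw [h] at this
    exact Finsupp.mem_support_iff.1 (hTsub hx₀) this.symm
  have hz : ∃ z ∈ u.support, z ∉ T := by
    by_contra hc
    push_neg at hc
    exact hne (Finset.Subset.antisymm hTsub hc)
  obtain ⟨z, hzsupp, hzT⟩ := hz
  have hwne : w ≠ 0 := by
    intro h
    have := hwx' z hzT
    rw [h] at this
    exact Finsupp.mem_support_iff.1 hzsupp this.symm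
  have hdw : dLin k Q R m w = 0 := by
    rw [hw, map_sub, hdu, hdv, sub_zero]
  have hdisj : Disjoint v.support w.support := by
    rw [Finset.disjoint_left]
    intro x hxv hxw
    have h1 : x ∈ T := hvsupp ▸ hxv
    exact Finsupp.mem_support_iff.1 hxw (hwx x h1)
  exact hirr.2 ⟨v, w, hvne, hwne, hdv, hdw, hdisj, by rw [hw, add_sub_cancel]⟩

end Aux3
section Aux4
open scoped Classical
variable {Q : Quiv} {R : Set (Q.A × Q.A)}

/-- The data of a "complete cycle" as a list: nonempty, composable, all
consecutive pairs (including the wrap-around pair) in `R`. -/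
def CycOK (Q : Quiv) (R : Set (Q.A × Q.A)) (l : List Q.A) : Prop :=
  l ≠ [] ∧ l.Chain' (fun a b => Q.tgt a = Q.src b) ∧ l.Chain' (fun a b => (a, b) ∈ R) ∧
    ∀ lst ∈ l.getLast?, ∀ hd ∈ l.head?, Q.tgt lst = Q.src hd ∧ (lst, hd) ∈ R

/-- The canonical basis pair `(γ, trivial)` attached to a cyclic list. -/
def mkx (Q : Quiv) (v₀ : Q.V) (l : List Q.A) : PathDat Q × PathDat Q :=
  ((l.head?.elim v₀ Q.src, l), (l.head?.elim v₀ Q.src, []))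

lemma getLast?_cons_ne {α : Type} {c : α} {t : List α} (ht : t ≠ []) :
    (c :: t).getLast? = t.getLast? := by
  obtain ⟨d, t', rfl⟩ := List.exists_cons_of_ne_nil ht
  exact List.getLast?_cons_cons

lemma cycok_rotate {l : List Q.A} (h : CycOK Q R l) : CycOK Q R (l.rotate 1) := by
  obtain ⟨c, t, rfl⟩ := List.exists_cons_of_ne_nil h.1
  rw [List.rotate_cons_succ, List.rotate_zero]
  rcases t with _ | ⟨d, t'⟩
  · simpa using h
  obtain ⟨hne, hcomp, hrel, hjun⟩ := h
  have hlast : (c :: d :: t').getLast? = (d :: t').getLast? := List.getLast?_cons_cons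
  have hjun' : ∀ lst ∈ (d :: t').getLast?, Q.tgt lst = Q.src c ∧ (lst, c) ∈ R := by
    intro lst hlst
    exact hjun lst (by rw [hlast]; exact hlst) c rfl
  refine ⟨by simp, ?_, ?_, ?_⟩
  · rw [List.Chain', List.isChain_append]
    exact ⟨hcomp.tail, List.isChain_singleton c,
      fun lst hlst hd hhd => by
        simp only [List.head?_cons, Option.mem_def, Option.some.injEq] at hhd
        subst hhd; exact (hjun' lst hlst).1⟩
  · rw [List.Chain', List.isChain_append]
    exact ⟨hrel.tail, List.isChain_singleton c,
      fun lst hlst hd hhd => by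
        simp only [List.head?_cons, Option.mem_def, Option.some.injEq] at hhd
        subst hhd; exact (hjun' lst hlst).2⟩
  · intro lst hlst hd hhd
    rw [List.getLast?_concat] at hlst
    rw [List.head?_append_of_ne_nil _ (by simp : (d :: t') ≠ [])] at hhd
    simp only [Option.mem_def, Option.some.injEq, List.head?_cons] at hlst hhd
    subst hlst; subst hhd
    exact ⟨(List.isChain_cons_cons.1 hcomp).1, (List.isChain_cons_cons.1 hrel).1⟩

lemma GBmem_mkx (v₀ : Q.V) {m : ℕ} {l : List Q.A} (hlen : l.length = m)
    (h : CycOK Q R l) : GBmem Q R m (mkx Q v₀ l) := by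
  obtain ⟨c, t, rfl⟩ := List.exists_cons_of_ne_nil h.1
  obtain ⟨hne, hcomp, hrel, hjun⟩ := h
  obtain ⟨lst, hlst⟩ : ∃ lst, (c :: t).getLast? = some lst :=
    ⟨(c :: t).getLast (by simp), List.getLast?_eq_getLast_of_ne_nil (by simp)⟩
  have hjc := hjun lst hlst c rfl
  refine ⟨⟨⟨hcomp, ?_⟩, hrel⟩, hlen,
    ⟨⟨List.isChain_nil, by intro a ha; simp [mkx] at ha⟩, List.isChain_nil⟩, rfl, ?_⟩
  · intro a ha
    have ha' : c = a := by simpa [mkx] using ha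
    subst ha'; rfl
  · show ptgt Q (mkx Q v₀ (c :: t)).1 = ptgt Q (mkx Q v₀ (c :: t)).2
    simp only [mkx, ptgt, hlst, List.getLast?_nil, List.head?_cons]
    simpa using hjc.1

lemma linkL_y_unique (hgen : IsGentle Q R) {m : ℕ} (hm : 0 < m) {x : GB Q R m}
    {y y' : GB Q R (m+1)} (h : LinkL Q R m x y) (h' : LinkL Q R m x y') : y = y' := by
  obtain ⟨b, e⟩ := h; obtain ⟨b', e'⟩ := h'
  obtain ⟨lst, hlst⟩ : ∃ lst, x.val.1.2.getLast? = some lst :=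
    ⟨x.val.1.2.getLast (gamma_ne_nil hm x),
      List.getLast?_eq_getLast_of_ne_nil (gamma_ne_nil hm x)⟩
  have key : ∀ (b'' : Q.A) (y'' : GB Q R (m+1)),
      y''.val = (extL Q b'' x.val.1, extL Q b'' x.val.2) →
      Q.tgt lst = Q.src b'' ∧ (lst, b'') ∈ R := by
    intro b'' y'' e''
    have hmem := e'' ▸ y''.2
    have hcomp : (x.val.1.2 ++ [b'']).Chain' (fun a b => Q.tgt a = Q.src b) := hmem.1.1.1
    have hrel : (x.val.1.2 ++ [b'']).Chain' (fun a b => (a, b) ∈ R) := hmem.1.2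
    rw [List.Chain', List.isChain_append] at hcomp hrel
    exact ⟨hcomp.2.2 lst hlst b'' rfl, hrel.2.2 lst hlst b'' rfl⟩
  have hb : b = b' := hgen.uniqRelAfter lst (key b y e) (key b' y' e')
  apply Subtype.ext
  rw [e, e', hb]

lemma linkR_y_unique (hgen : IsGentle Q R) {m : ℕ} (hm : 0 < m) {x : GB Q R m}
    {y y' : GB Q R (m+1)} (h : LinkR Q R m x y) (h' : LinkR Q R m x y') : y = y' := by
  obtain ⟨a, -, e⟩ := h; obtain ⟨a', -, e'⟩ := h'
  obtain ⟨c, t, hct⟩ := List.exists_cons_of_ne_nil (gamma_ne_nil hm x)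
  have key : ∀ (a'' : Q.A) (y'' : GB Q R (m+1)),
      y''.val = (extR Q a'' x.val.1, extR Q a'' x.val.2) →
      Q.tgt a'' = Q.src c ∧ (a'', c) ∈ R := by
    intro a'' y'' e''
    have hmem := e'' ▸ y''.2
    have hcomp : (a'' :: x.val.1.2).Chain' (fun a b => Q.tgt a = Q.src b) := hmem.1.1.1
    have hrel : (a'' :: x.val.1.2).Chain' (fun a b => (a, b) ∈ R) := hmem.1.2
    rw [hct] at hcomp hrel
    exact ⟨(List.isChain_cons_cons.1 hcomp).1, (List.isChain_cons_cons.1 hrel).1⟩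
  have ha : a = a' := hgen.uniqRelBefore c (key a y e) (key a' y' e')
  apply Subtype.ext
  rw [e, e', ha]

lemma no_pred_of_eq_heads {m : ℕ} (hm : 0 < m) {x : GB Q R m}
    (hal : x.val.2.2 ≠ []) (hhd : x.val.1.2.head? = x.val.2.2.head?)
    {y : GB Q R (m+1)} (h : LinkR Q R m x y) : False := by
  obtain ⟨a, -, e⟩ := h
  obtain ⟨c, t, hct⟩ := List.exists_cons_of_ne_nil (gamma_ne_nil hm x)
  obtain ⟨c', s, hcs⟩ := List.exists_cons_of_ne_nil hal
  have hcc : c = c' := by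
    rw [hct, hcs] at hhd
    simpa using hhd
  have hmem := e ▸ y.2
  have hrel : (a :: x.val.1.2).Chain' (fun a b => (a, b) ∈ R) := hmem.1.2
  have hnrel : (a :: x.val.2.2).Chain' (fun a b => (a, b) ∉ R) := hmem.2.2.1.2
  rw [hct] at hrel; rw [hcs] at hnrel
  exact (List.isChain_cons_cons.1 hnrel).1 (hcc ▸ (List.isChain_cons_cons.1 hrel).1)

end Aux4
section Aux5
open scoped Classical
variable {k : Type} [Field k] {Q : Quiv} {R : Set (Q.A × Q.A)}

lemma stepA {m : ℕ} (hm : 2 ≤ m) {u : Coch k Q R m}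
    (hdu : dLin k Q R m u = 0) (v₀ : Q.V) {l : List Q.A} (hlen : l.length = m)
    (hcyc : CycOK Q R l) {x : GB Q R m} (hx : x ∈ u.support)
    (hval : x.val = mkx Q v₀ l) :
    ∃ (y : GB Q R (m+1)) (x₁ : GB Q R m), LinkL Q R m x y ∧ x₁ ∈ u.support ∧
      x₁.val = mkx Q v₀ (l.rotate 1) ∧ LinkR Q R m x₁ y ∧ u x = (-1:k)^m * u x₁ := by
  obtain ⟨c, t, rfl⟩ := List.exists_cons_of_ne_nil hcyc.1
  have htne : t ≠ [] := by
    intro h; rw [h] at hlen; simp at hlen; omega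
  obtain ⟨d, t', rfl⟩ := List.exists_cons_of_ne_nil htne
  obtain ⟨hne, hcomp, hrel, hjun⟩ := hcyc
  obtain ⟨lst, hlst⟩ : ∃ lst, (c :: d :: t').getLast? = some lst :=
    ⟨_, List.getLast?_eq_getLast_of_ne_nil (by simp)⟩
  have hjc := hjun lst hlst c rfl
  set yval : PathDat Q × PathDat Q :=
    (extL Q c (mkx Q v₀ (c :: d :: t')).1, extL Q c (mkx Q v₀ (c :: d :: t')).2) with hyval
  have hyval1 : yval.1 = (Q.src c, (c :: d :: t') ++ [c]) := rfl
  have hyval2 : yval.2 = (Q.src c, [c]) := rfl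
  have hymem : GBmem Q R (m+1) yval := by
    refine ⟨⟨⟨?_, ?_⟩, ?_⟩, ?_, ⟨⟨?_, ?_⟩, ?_⟩, ?_, ?_⟩
    · rw [hyval1]
      show ((c :: d :: t') ++ [c]).Chain' _
      rw [List.Chain', List.isChain_append]
      exact ⟨hcomp, List.isChain_singleton c,
        fun l1 h1 h2 h3 => by
          simp only [List.head?_cons, Option.mem_def, Option.some.injEq] at h3
          subst h3
          exact (hjun l1 h1 c rfl).1⟩
    · intro a ha
      rw [hyval1] at ha ⊢
      simp only [List.cons_append, List.head?_cons, Option.mem_def, Option.some.injEq] at ha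
      subst ha; rfl
    · rw [hyval1]
      show ((c :: d :: t') ++ [c]).Chain' _
      rw [List.Chain', List.isChain_append]
      exact ⟨hrel, List.isChain_singleton c,
        fun l1 h1 h2 h3 => by
          simp only [List.head?_cons, Option.mem_def, Option.some.injEq] at h3
          subst h3
          exact (hjun l1 h1 c rfl).2⟩
    · show plen Q yval.1 = m + 1
      rw [hyval1, plen]
      simp only [List.length_append, List.length_cons, List.length_nil] at hlen ⊢
      omega
    · rw [hyval2]; exact List.isChain_singleton c
    · intro a ha
      rw [hyval2] at ha ⊢
      simp only [List.head?_cons, Option.mem_def, Option.some.injEq] at ha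
      subst ha; rfl
    · rw [hyval2]; exact List.isChain_singleton c
    · show psrc Q yval.1 = psrc Q yval.2
      rw [hyval1, hyval2]; rfl
    · show ptgt Q yval.1 = ptgt Q yval.2
      rw [hyval1, hyval2]
      show ((c :: d :: t') ++ [c]).getLast?.elim _ _ = ([c] : List Q.A).getLast?.elim _ _
      rw [List.getLast?_concat]; rfl
  set y : GB Q R (m+1) := ⟨yval, hymem⟩ with hy
  have hL : LinkL Q R m x y := ⟨c, by rw [hval]⟩
  obtain ⟨x', hx', hR, hrel'⟩ := cancel_L (by omega) hdu hx hL
  refine ⟨y, x', hL, hx', ?_, hR, hrel'⟩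
  obtain ⟨a, htgt, e⟩ := hR
  have e1 : yval.1 = extR Q a x'.val.1 := congrArg Prod.fst e
  have e2 : yval.2 = extR Q a x'.val.2 := congrArg Prod.snd e
  rw [hyval1] at e1; rw [hyval2] at e2
  have h1 : (c :: ((d :: t') ++ [c])) = a :: x'.val.1.2 := by
    have := congrArg Prod.snd e1; simpa [extR] using this
  have hp1 := (List.cons.injEq c ((d :: t') ++ [c]) a x'.val.1.2) ▸ h1
  have hac : a = c := hp1.1.symm
  have hg' : x'.val.1.2 = (d :: t') ++ [c] := hp1.2.symm
  have h2 : ([c] : List Q.A) = a :: x'.val.2.2 := by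
    have := congrArg Prod.snd e2; simpa [extR] using this
  have hp2 := (List.cons.injEq c ([] : List Q.A) a x'.val.2.2) ▸ h2
  have hal' : x'.val.2.2 = [] := hp2.2.symm
  have hv' : x'.val.1.1 = Q.src d := by
    apply fst_eq_src_head x'.2.1.1
    rw [hg']; rfl
  have hvα : x'.val.2.1 = x'.val.1.1 := by
    have := x'.2.2.2.2.1
    rw [psrc, psrc] at this; exact this.symm
  have hrot : (c :: d :: t').rotate 1 = (d :: t') ++ [c] := by
    rw [List.rotate_cons_succ, List.rotate_zero]
  rw [hrot]
  have hhd : ((d :: t') ++ [c]).head?.elim v₀ Q.src = Q.src d := rfl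
  apply Prod.ext
  · show x'.val.1 = _
    apply Prod.ext
    · rw [hv']; exact hhd.symm
    · exact hg'
  · show x'.val.2 = _
    apply Prod.ext
    · rw [hvα, hv']; exact hhd.symm
    · exact hal'

end Aux5
section Aux6
open scoped Classical
variable {k : Type} [Field k] {Q : Quiv} {R : Set (Q.A × Q.A)}

lemma not_isolated {m : ℕ} (hm : 0 < m) {u : Coch k Q R m}
    (hirr : IsIrreducibleCocycle k Q R m u) (hrk : 1 < u.support.card)
    {x₀ : GB Q R m} (hx₀ : x₀ ∈ u.support) :
    (∃ y, LinkL Q R m x₀ y) ∨ (∃ y, LinkR Q R m x₀ y) := by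
  by_contra hiso
  push_neg at hiso
  have hT := irred_closed hm hirr {x₀} (by simpa using hx₀) ⟨x₀, by simp⟩ ?_
  · rw [← hT] at hrk
    simp at hrk
  · intro x hxT x' hx' y hlink
    simp only [Finset.mem_singleton] at hxT
    subst hxT
    rcases hlink with ⟨h1, -⟩ | ⟨-, h2⟩
    · exact absurd h1 (hiso.1 y)
    · exact absurd h2 (hiso.2 y)

lemma caseA_cyc {m : ℕ} (hm : 2 ≤ m) {u : Coch k Q R m}
    (hirr : IsIrreducibleCocycle k Q R m u) (hrk : 1 < u.support.card)
    {x₀ : GB Q R m} (hx₀ : x₀ ∈ u.support) (htriv : x₀.val.2.2 = []) :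
    CycOK Q R x₀.val.1.2 := by
  have hm0 : 0 < m := by omega
  have hdu := hirr.1
  have hgne : x₀.val.1.2 ≠ [] := gamma_ne_nil hm0 x₀
  obtain ⟨c, t, hct⟩ := List.exists_cons_of_ne_nil hgne
  have hcomp : x₀.val.1.2.Chain' (fun a b => Q.tgt a = Q.src b) := x₀.2.1.1.1
  have hrel : x₀.val.1.2.Chain' (fun a b => (a, b) ∈ R) := x₀.2.1.2
  obtain ⟨lst, hlst⟩ : ∃ lst, x₀.val.1.2.getLast? = some lst :=
    ⟨_, List.getLast?_eq_getLast_of_ne_nil hgne⟩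
  -- target/source matching of the cycle
  have hjun0 : Q.tgt lst = Q.src c := by
    have hpar := x₀.2.2.2.2
    have h1 : ptgt Q x₀.val.1 = Q.tgt lst := by rw [ptgt, hlst]; rfl
    have h2 : ptgt Q x₀.val.2 = x₀.val.2.1 := by rw [ptgt, htriv]; rfl
    have h3 : x₀.val.2.1 = x₀.val.1.1 := by
      have := hpar.1; rw [psrc, psrc] at this; exact this.symm
    have h4 : x₀.val.1.1 = Q.src c := fst_eq_src_head x₀.2.1.1 hct
    rw [hpar.2, h2, h3, h4] at h1
    exact h1.symm
  -- the wrap-around relation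
  have hwrap : (lst, c) ∈ R := by
    rcases not_isolated hm0 hirr hrk hx₀ with ⟨y, hLy⟩ | ⟨y, hRy⟩
    · obtain ⟨x', hx', hR, -⟩ := cancel_L hm0 hdu hx₀ hLy
      obtain ⟨b, eb⟩ := hLy
      obtain ⟨a, -, ea⟩ := hR
      have e := eb.symm.trans ea
      -- second components of the pairs
      have e2 : x₀.val.2.2 ++ [b] = a :: x'.val.2.2 := by
        have := congrArg (fun z => z.2.2) e; simpa [extL, extR] using this
      rw [htriv] at e2
      have hab : b = a := by
        have := (List.cons.injEq b ([] : List Q.A) a x'.val.2.2) ▸ e2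
        exact this.1
      have e1 : x₀.val.1.2 ++ [b] = a :: x'.val.1.2 := by
        have := congrArg (fun z => z.1.2) e; simpa [extL, extR] using this
      have hbc : a = c := by
        rw [hct] at e1
        have := (List.cons.injEq c (t ++ [b]) a x'.val.1.2) ▸ e1
        exact this.1.symm
      -- y ∈ Γ gives the junction relation
      have hmem := eb ▸ y.2
      have hchain : (x₀.val.1.2 ++ [b]).Chain' (fun a b => (a, b) ∈ R) := hmem.1.2
      rw [List.Chain', List.isChain_append] at hchain
      have := hchain.2.2 lst hlst b rfl
      rwa [hab, hbc] at this
    · obtain ⟨x'', hx'', hL'', -⟩ := cancel_R hm0 hdu hx₀ hRy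
      obtain ⟨a, -, ea⟩ := hRy
      obtain ⟨b, eb⟩ := hL''
      have e := eb.symm.trans ea
      -- β components : al'' ++ [b] = [a]
      have e2 : x''.val.2.2 ++ [b] = a :: x₀.val.2.2 := by
        have := congrArg (fun z => z.2.2) e; simpa [extL, extR] using this
      rw [htriv] at e2
      have hba : b = a := by
        rcases hx2 : x''.val.2.2 with _ | ⟨z, zs⟩
        · rw [hx2] at e2; simpa using e2
        · rw [hx2] at e2
          have := congrArg List.length e2
          simp at this
      -- δ components : g'' ++ [b] = a :: g
      have e1 : x''.val.1.2 ++ [b] = a :: x₀.val.1.2 := by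
        have := congrArg (fun z => z.1.2) e; simpa [extL, extR] using this
      -- last of g is a
      have hlsta : lst = a := by
        have hgl : (x''.val.1.2 ++ [b]).getLast? = some b := List.getLast?_concat
        rw [e1, getLast?_cons_ne hgne, hlst] at hgl
        have : lst = b := by simpa using hgl
        rw [this, hba]
      -- (a, head g) ∈ R from y ∈ Γ
      have hmem := ea ▸ y.2
      have hchain : (a :: x₀.val.1.2).Chain' (fun a b => (a, b) ∈ R) := hmem.1.2
      rw [hct] at hchain
      have := (List.isChain_cons_cons.1 hchain).1
      rwa [hlsta]
  refine ⟨hgne, hcomp, hrel, ?_⟩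
  intro l1 h1 h2 h3
  rw [hlst] at h1
  rw [hct] at h3
  simp only [Option.mem_def, Option.some.injEq, List.head?_cons] at h1 h3
  subst h1; subst h3
  exact ⟨hjun0, hwrap⟩

end Aux6
section Aux7
open scoped Classical
variable {k : Type} [Field k] {Q : Quiv} {R : Set (Q.A × Q.A)}

lemma bv_coe {m : ℕ} (z : GB Q R m) : bv k Q R m z.val = Finsupp.single z 1 := by
  unfold bv
  rw [dif_pos z.2]

lemma rotP_eq {p : PathDat Q} {a : Q.A} (h : p.2.getLast? = some a) :
    rotP Q p = (Q.src a, a :: p.2.dropLast) := by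
  unfold rotP
  split
  · next h' => rw [h'] at h; exact absurd h (by simp)
  · next b h' => rw [h'] at h; simp only [Option.some.injEq] at h; rw [h]

lemma caseA (hgen : IsGentle Q R) {m' : ℕ} {u : Coch k Q R (m'+2)}
    (hirr : IsIrreducibleCocycle k Q R (m'+2) u) (hrk : 1 < u.support.card)
    {x₀ : GB Q R (m'+2)} (hx₀ : x₀ ∈ u.support) (htriv : x₀.val.2.2 = []) :
    (Even (m' + 2) ∨ ringChar k = 2) ∧
    u.support.card ∣ (m' + 2) ∧
    ∃ C : PathDat Q, Complete Q R C ∧ plen Q C = m' + 2 ∧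
      periodP Q C = u.support.card ∧
      ∃ c : k, c ≠ 0 ∧ u = c • cycG k Q R (m' + 2) C := by
  have hm2 : 2 ≤ m' + 2 := by omega
  have hm0 : 0 < m' + 2 := by omega
  have hdu := hirr.1
  obtain ⟨v₀⟩ := hgen.nonempty
  have hcyc : CycOK Q R x₀.val.1.2 := caseA_cyc hm2 hirr hrk hx₀ htriv
  set g := x₀.val.1.2 with hgdef
  have hgne : g ≠ [] := hcyc.1
  have hlen : g.length = m' + 2 := x₀.2.2.1
  obtain ⟨c0, t0, hct⟩ := List.exists_cons_of_ne_nil hgne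
  have hvalx₀ : x₀.val = mkx Q v₀ g := by
    have h1 : x₀.val.1.1 = Q.src c0 := fst_eq_src_head x₀.2.1.1 hct
    have h2 : x₀.val.2.1 = x₀.val.1.1 := by
      have := x₀.2.2.2.2.1; rw [psrc, psrc] at this; exact this.symm
    have h3 : (mkx Q v₀ g).1.1 = Q.src c0 := by rw [mkx]; rw [hct]; rfl
    refine Prod.ext (Prod.ext ?_ rfl) (Prod.ext ?_ ?_)
    · rw [h1, h3]
    · show x₀.val.2.1 = (mkx Q v₀ g).2.1
      rw [h2, h1]; exact h3.symm
    · exact htriv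
  -- rotation period
  have hperm : g.rotate (m' + 2) = g := by rw [← hlen]; exact List.rotate_length g
  have hexp : ∃ i, 1 ≤ i ∧ g.rotate i = g := ⟨m' + 2, by omega, hperm⟩
  set p := Nat.find hexp with hpdef
  obtain ⟨hp1, hprot⟩ : 1 ≤ p ∧ g.rotate p = g := Nat.find_spec hexp
  have hmin : ∀ i, i < p → ¬(1 ≤ i ∧ g.rotate i = g) := fun i hi => Nat.find_min hexp hi
  have hppow : ∀ q, g.rotate (p * q) = g := by
    intro q
    induction q with
    | zero => simp
    | succ q ih =>
      have : p * (q + 1) = p * q + p := by ring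
      rw [this, ← List.rotate_rotate, ih, hprot]
  have hdvd : p ∣ (m' + 2) := by
    apply Nat.dvd_of_mod_eq_zero
    by_contra hmod
    have hlt : (m' + 2) % p < p := Nat.mod_lt _ (by omega)
    have heq : g.rotate ((m' + 2) % p) = g := by
      have h1 : p * ((m' + 2) / p) + (m' + 2) % p = m' + 2 := Nat.div_add_mod _ _
      have h2 : g.rotate (p * ((m' + 2) / p) + (m' + 2) % p) = g := by rw [h1]; exact hperm
      rw [← List.rotate_rotate, hppow] at h2
      exact h2
    exact hmin _ hlt ⟨by omega, heq⟩
  have hplem : p ≤ m' + 2 := Nat.le_of_dvd (by omega) hdvd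
  -- the orbit
  have hcycrot : ∀ i, CycOK Q R (g.rotate i) := by
    intro i
    induction i with
    | zero => simpa using hcyc
    | succ i ih =>
      have : g.rotate (i + 1) = (g.rotate i).rotate 1 := (List.rotate_rotate g i 1).symm
      rw [this]; exact cycok_rotate ih
  have hlenrot : ∀ i, (g.rotate i).length = m' + 2 := by
    intro i; rw [List.length_rotate]; exact hlen
  set xsub : ℕ → GB Q R (m' + 2) :=
    fun i => ⟨mkx Q v₀ (g.rotate i), GBmem_mkx v₀ (hlenrot i) (hcycrot i)⟩ with hxsubdef
  have hxsubval : ∀ i, (xsub i).val = mkx Q v₀ (g.rotate i) := fun i => rfl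
  have hxsub0 : xsub 0 = x₀ := by
    apply Subtype.ext
    rw [hxsubval, List.rotate_zero, hvalx₀]
  have hxsubp : xsub p = xsub 0 := by
    apply Subtype.ext
    rw [hxsubval, hxsubval, hprot, List.rotate_zero]
  have hrotinj : ∀ i j, i ≤ j → j < p → g.rotate i = g.rotate j → i = j := by
    intro i j hij hjp he
    by_contra hne
    have hij' : i < j := by omega
    have him : i ≤ m' + 2 := by omega
    have h1 : (g.rotate i).rotate ((m' + 2) - i) = g := by
      rw [List.rotate_rotate]
      have : i + ((m' + 2) - i) = m' + 2 := by omega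
      rw [this]; exact hperm
    have h2 : (g.rotate j).rotate ((m' + 2) - i) = g.rotate (j - i) := by
      rw [List.rotate_rotate]
      have : j + ((m' + 2) - i) = (m' + 2) + (j - i) := by omega
      rw [this, ← List.rotate_rotate, hperm]
    rw [he, h2] at h1
    exact hmin (j - i) (by omega) ⟨by omega, h1⟩
  -- iteration of the step lemma
  have hmem : ∀ i, xsub i ∈ u.support := by
    intro i
    induction i with
    | zero => rw [hxsub0]; exact hx₀
    | succ i ih =>
      obtain ⟨y, x₁, hL, hx₁, hval₁, hR, hrel⟩ :=
        stepA hm2 hdu v₀ (hlenrot i) (hcycrot i) ih (hxsubval i)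
      have : x₁ = xsub (i + 1) := by
        apply Subtype.ext
        rw [hval₁, hxsubval, List.rotate_rotate]
      rwa [← this]
  have hstep : ∀ i, ∃ y, LinkL Q R (m'+2) (xsub i) y ∧ LinkR Q R (m'+2) (xsub (i+1)) y ∧
      u (xsub i) = (-1:k)^(m'+2) * u (xsub (i+1)) := by
    intro i
    obtain ⟨y, x₁, hL, hx₁, hval₁, hR, hrel⟩ :=
      stepA hm2 hdu v₀ (hlenrot i) (hcycrot i) (hmem i) (hxsubval i)
    have hx1 : x₁ = xsub (i + 1) := by
      apply Subtype.ext
      rw [hval₁, hxsubval, List.rotate_rotate]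
    exact ⟨y, hL, hx1 ▸ hR, hx1 ▸ hrel⟩
  set ε : k := (-1 : k)^(m' + 2) with hεdef
  have hcoefpow : ∀ i, u (xsub 0) = ε^i * u (xsub i) := by
    intro i
    induction i with
    | zero => simp
    | succ i ih =>
      obtain ⟨y, -, -, hrel⟩ := hstep i
      rw [ih, hrel, pow_succ]
      ring
  -- the support is exactly the orbit
  set T : Finset (GB Q R (m' + 2)) := (Finset.range p).image xsub with hTdef
  have hTsub : T ⊆ u.support := by
    intro z hz
    rw [hTdef, Finset.mem_image] at hz
    obtain ⟨i, -, rfl⟩ := hz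
    exact hmem i
  have hTne : T.Nonempty := ⟨xsub 0, by
    rw [hTdef, Finset.mem_image]
    exact ⟨0, Finset.mem_range.2 (by omega), rfl⟩⟩
  have hxsubinj : ∀ i ∈ Finset.range p, ∀ j ∈ Finset.range p, xsub i = xsub j → i = j := by
    intro i hi j hj he
    rw [Finset.mem_range] at hi hj
    have hrot : g.rotate i = g.rotate j := by
      have := congrArg (fun z => (Subtype.val z).1.2) he
      simpa [hxsubval, mkx] using this
    rcases le_or_gt i j with h | h
    · exact hrotinj i j h hj hrot
    · exact (hrotinj j i (le_of_lt h) hi hrot.symm).symm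
  have hmemT : ∀ i, i < p → xsub i ∈ T := by
    intro i hi
    rw [hTdef, Finset.mem_image]
    exact ⟨i, Finset.mem_range.2 hi, rfl⟩
  have hclosed : ∀ x ∈ T, ∀ x' ∈ u.support, ∀ y : GB Q R (m'+2+1),
      (LinkL Q R (m'+2) x y ∧ LinkR Q R (m'+2) x' y) ∨
      (LinkL Q R (m'+2) x' y ∧ LinkR Q R (m'+2) x y) → x' ∈ T := by
    intro x hxT x' hx' y hlink
    rw [hTdef, Finset.mem_image] at hxT
    obtain ⟨i, hi, rfl⟩ := hxT
    rw [Finset.mem_range] at hi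
    rcases hlink with ⟨hLy, hRy'⟩ | ⟨hLy', hRy⟩
    · obtain ⟨y₀, hL₀, hR₀, -⟩ := hstep i
      have hyy : y = y₀ := linkL_y_unique hgen hm0 hLy hL₀
      have hx'eq : x' = xsub (i + 1) := uniqR hm0 (hyy ▸ hRy') hR₀
      rcases Nat.lt_or_ge (i + 1) p with h | h
      · rw [hx'eq]; exact hmemT _ h
      · have hip : i + 1 = p := by omega
        rw [hx'eq, hip, hxsubp]
        exact hmemT 0 (by omega)
    · rcases Nat.eq_zero_or_pos i with rfl | hipos
      · obtain ⟨y₀, hL₀, hR₀, -⟩ := hstep (p - 1)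
        have hps : p - 1 + 1 = p := by omega
        rw [hps, hxsubp] at hR₀
        have hyy : y = y₀ := linkR_y_unique hgen hm0 hRy hR₀
        have hx'eq : x' = xsub (p - 1) := uniqL (hyy ▸ hLy') hL₀
        rw [hx'eq]; exact hmemT _ (by omega)
      · obtain ⟨y₀, hL₀, hR₀, -⟩ := hstep (i - 1)
        have his : i - 1 + 1 = i := by omega
        rw [his] at hR₀
        have hyy : y = y₀ := linkR_y_unique hgen hm0 hRy hR₀
        have hx'eq : x' = xsub (i - 1) := uniqL (hyy ▸ hLy') hL₀
        rw [hx'eq]; exact hmemT _ (by omega)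
  have hsupT : T = u.support := irred_closed hm0 hirr T hTsub hTne hclosed
  have hcard : u.support.card = p := by
    rw [← hsupT, hTdef, Finset.card_image_of_injOn hxsubinj, Finset.card_range]
  -- sign closure
  have hux₀ : u (xsub 0) ≠ 0 := by
    rw [hxsub0]; exact Finsupp.mem_support_iff.1 hx₀
  have hsign : ε^p = 1 := by
    have h := hcoefpow p
    rw [hxsubp] at h
    have h' : (1:k) * u (xsub 0) = ε^p * u (xsub 0) := by rw [one_mul]; exact h
    exact (mul_right_cancel₀ hux₀ h').symm
  have hεsq : ε * ε = 1 := by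
    rw [hεdef, ← pow_add]
    exact Even.neg_one_pow ⟨m' + 2, rfl⟩
  -- conclusion (1)
  have hcon1 : Even (m' + 2) ∨ ringChar k = 2 := by
    by_cases heven : Even (m' + 2)
    · exact Or.inl heven
    · right
      have hodd : Odd (m' + 2) := Nat.not_even_iff_odd.1 heven
      have hpodd : Odd p := by
        rcases Nat.even_or_odd p with he | ho
        · exfalso
          obtain ⟨q, hq⟩ := he
          obtain ⟨r, hr⟩ := hdvd
          exact heven (by rw [hr, hq]; exact ⟨q * r, by ring⟩)
        · exact ho
      have hε : ε = -1 := by rw [hεdef]; exact Odd.neg_one_pow hodd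
      have h1 : ((-1 : k))^p = 1 := by rw [← hε]; exact hsign
      have h2 : ((-1 : k))^p = -1 := Odd.neg_one_pow hpodd
      have h3 : (2 : k) = 0 := by
        have : (-1 : k) = 1 := by rw [← h2, h1]
        linear_combination -this
      have hdvd2 : ringChar k ∣ 2 := by
        have := ringChar.charP k
        exact (CharP.cast_eq_zero_iff k (ringChar k) 2).1 (by exact_mod_cast h3)
      rcases (Nat.dvd_prime Nat.prime_two).1 hdvd2 with h | h
      · exact absurd h (CharP.ringChar_ne_one)
      · exact h
  -- the complete cycle C
  set Cp : ℕ → PathDat Q := fun j => (mkx Q v₀ (g.rotate j)).1 with hCpdef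
  set C : PathDat Q := Cp 0 with hCdef
  have hCval : C = (mkx Q v₀ g).1 := by
    show (mkx Q v₀ (g.rotate 0)).1 = (mkx Q v₀ g).1
    rw [List.rotate_zero]
  have hC2 : C.2 = g := by rw [hCval]; rfl
  have hCp2 : ∀ j, (Cp j).2 = g.rotate j := fun j => rfl
  have hCpp : Cp p = Cp 0 := by rw [hCpdef]; simp only [hprot, List.rotate_zero]
  -- C is a complete cycle
  have hcomplete : Complete Q R C ∧ plen Q C = m' + 2 := by
    have hx₀c : x₀.val.1 = C := by rw [hCval, hvalx₀]
    obtain ⟨hne', hcomp', hrel', hjun'⟩ := hcyc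
    obtain ⟨lst, hlst⟩ : ∃ lst, g.getLast? = some lst :=
      ⟨_, List.getLast?_eq_getLast_of_ne_nil hgne⟩
    have hj := hjun' lst hlst c0 (by rw [hct]; rfl)
    have hCfst : C.1 = Q.src c0 := by rw [hCval, mkx, hct]; rfl
    have hOkC : Ok Q C := by
      constructor
      · rw [hC2]; exact hcomp'
      · intro a ha
        rw [hC2, hct] at ha
        simp only [List.head?_cons, Option.mem_def, Option.some.injEq] at ha
        subst ha; rw [hCfst]
    have hptgtC : ptgt Q C = Q.src c0 := by
      rw [ptgt, hC2, hlst]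
      simpa using hj.1
    have hcycC : IsCycle Q C := by
      refine ⟨hOkC, by rw [hC2]; exact hgne, ?_⟩
      rw [psrc, hCfst, hptgtC]
    have hpow2 : (powP Q C 2).2 = g ++ g := by
      show powL C.2 2 = g ++ g
      rw [hC2]
      show g ++ (g ++ []) = g ++ g
      rw [List.append_nil]
    have hjunc : ∀ x ∈ g.getLast?, ∀ b ∈ g.head?, Q.tgt x = Q.src b ∧ (x, b) ∈ R := hjun'
    have hInG : InG Q R (powP Q C 2) := by
      refine ⟨⟨?_, ?_⟩, ?_⟩
      · show (powP Q C 2).2.Chain' _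
        rw [hpow2, List.Chain', List.isChain_append]
        exact ⟨hcomp', hcomp', fun a ha b hb => (hjunc a ha b hb).1⟩
      · intro a ha
        have h2 : (powP Q C 2).2.head? = some c0 := by
          rw [hpow2, List.head?_append_of_ne_nil _ hgne, hct]; rfl
        rw [h2] at ha
        have ha' : c0 = a := by simpa using ha
        rw [← ha']
        show Q.src c0 = C.1
        rw [hCfst]
      · show (powP Q C 2).2.Chain' _
        rw [hpow2, List.Chain', List.isChain_append]
        exact ⟨hrel', hrel', fun a ha b hb => (hjunc a ha b hb).2⟩
    refine ⟨⟨hcycC, hInG⟩, ?_⟩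
    show C.2.length = m' + 2
    rw [hC2]; exact hlen
  -- rotations of C
  have hrotP : ∀ j, rotP Q (Cp (j + 1)) = Cp j := by
    intro j
    obtain ⟨cj, tj, hctj⟩ := List.exists_cons_of_ne_nil (hcycrot j).1
    have hr1 : g.rotate (j + 1) = tj ++ [cj] := by
      rw [← List.rotate_rotate, hctj, List.rotate_cons_succ, List.rotate_zero]
    have hlast : (Cp (j+1)).2.getLast? = some cj := by
      rw [hCp2, hr1]; exact List.getLast?_concat
    rw [rotP_eq hlast]
    have hdrop : (Cp (j+1)).2.dropLast = tj := by
      rw [hCp2, hr1]; exact List.dropLast_concat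
    rw [hdrop]
    have : (Cp j).1 = Q.src cj := by
      rw [hCpdef]; show (mkx Q v₀ (g.rotate j)).1.1 = Q.src cj
      rw [mkx, hctj]; rfl
    refine Prod.ext this.symm ?_
    show (cj :: tj : List Q.A) = (Cp j).2
    rw [hCp2, hctj]
  have hrotI : ∀ i j, i ≤ j → rotI Q i (Cp j) = Cp (j - i) := by
    intro i
    induction i with
    | zero => intro j _; rw [rotI]; simp
    | succ i ih =>
      intro j hij
      have hj1 : j = (j - 1) + 1 := by omega
      rw [rotI, Function.iterate_succ_apply]
      have h1 : rotP Q (Cp j) = Cp (j - 1) := by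
        conv_lhs => rw [hj1]
        rw [hrotP (j-1)]
      rw [h1]
      have := ih (j - 1) (by omega)
      rw [rotI] at this
      rw [this]
      congr 1
      omega
  have hrotIp : rotI Q p C = C := by
    rw [hCdef, ← hCpp, hrotI p p le_rfl]
    simp [hCpp]
  have hperiod : periodP Q C = p := by
    have hmemset : p ∈ {i : ℕ | 1 ≤ i ∧ rotI Q i C = C} := ⟨hp1, hrotIp⟩
    have hle : periodP Q C ≤ p := Nat.sInf_le hmemset
    have hgemem : periodP Q C ∈ {i : ℕ | 1 ≤ i ∧ rotI Q i C = C} :=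
      Nat.sInf_mem (⟨p, hmemset⟩ : {i : ℕ | 1 ≤ i ∧ rotI Q i C = C}.Nonempty)
    obtain ⟨hq1, hqrot⟩ := hgemem
    rcases Nat.lt_or_ge (periodP Q C) p with hlt | hge
    · exfalso
      have h1 : rotI Q (periodP Q C) (Cp p) = Cp (p - periodP Q C) :=
        hrotI (periodP Q C) p (by omega)
      rw [hCpp, ← hCdef, hqrot] at h1
      have h2 : g.rotate (p - periodP Q C) = g := by
        rw [← hCp2 (p - periodP Q C), ← h1]
        exact hC2
      exact hmin (p - periodP Q C) (by omega) ⟨by omega, h2⟩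
    · omega
  refine ⟨hcon1, by rw [hcard]; exact hdvd, C, hcomplete.1, hcomplete.2, by rw [hperiod, hcard], u (xsub 0), hux₀, ?_⟩
  -- the scalar-multiple identity
  have hbvterm : ∀ i, i < p →
      bv k Q R (m'+2) (rotI Q i C, (psrc Q (rotI Q i C), [])) =
        Finsupp.single (xsub (p - i)) 1 := by
    intro i hi
    have h1 : rotI Q i C = Cp (p - i) := by
      rw [hCdef, ← hCpp]; exact hrotI i p (by omega)
    have h2 : (rotI Q i C, ((rotI Q i C).1, ([] : List Q.A))) = (xsub (p - i)).val := by
      rw [h1]; rfl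
    rw [psrc, h2, bv_coe]
  have hcycG : cycG k Q R (m'+2) C = ∑ i ∈ Finset.range p,
      ((-1:k))^(i * (m'+2)) • Finsupp.single (xsub (p - i)) (1:k) := by
    rw [cycG, hperiod]
    apply Finset.sum_congr rfl
    intro i hi
    rw [Finset.mem_range] at hi
    rw [hbvterm i hi]
  have husum : u = ∑ j ∈ Finset.range p, Finsupp.single (xsub j) (u (xsub j)) := by
    conv_lhs => rw [← Finsupp.sum_single u]
    rw [Finsupp.sum, ← hsupT, hTdef]
    rw [Finset.sum_image hxsubinj]
  conv_lhs => rw [husum]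
  rw [hcycG, Finset.smul_sum]
  apply Finset.sum_nbij' (i := fun j => (p - j) % p) (j := fun i => (p - i) % p)
  · intro j hj
    rw [Finset.mem_range] at hj ⊢
    exact Nat.mod_lt _ (by omega)
  · intro i hi
    rw [Finset.mem_range] at hi ⊢
    exact Nat.mod_lt _ (by omega)
  · intro j hj
    rw [Finset.mem_range] at hj
    rcases Nat.eq_zero_or_pos j with rfl | hj0
    · simp
    · have h1 : (p - j) % p = p - j := Nat.mod_eq_of_lt (by omega)
      rw [h1]
      have h2 : (p - (p - j)) = j := by omega
      rw [h2, Nat.mod_eq_of_lt (by omega)]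
  · intro i hi
    rw [Finset.mem_range] at hi
    rcases Nat.eq_zero_or_pos i with rfl | hi0
    · simp
    · have h1 : (p - i) % p = p - i := Nat.mod_eq_of_lt (by omega)
      rw [h1]
      have h2 : (p - (p - i)) = i := by omega
      rw [h2, Nat.mod_eq_of_lt (by omega)]
  · intro j hj
    rw [Finset.mem_range] at hj
    have hsm : ∀ (z : GB Q R (m'+2)) (a b : k),
        a • ((b : k) • Finsupp.single z (1:k)) = Finsupp.single z (a * b) := by
      intro z a b
      rw [smul_smul, Finsupp.smul_single, smul_eq_mul, mul_one]
    rcases Nat.eq_zero_or_pos j with rfl | hj0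
    · have h0 : (p - 0) % p = 0 := by
        rw [Nat.sub_zero, Nat.mod_self]
      rw [h0, Nat.sub_zero, hxsubp, hsm]
      congr 1
      rw [Nat.zero_mul, pow_zero, mul_one]
    · have h1 : (p - j) % p = p - j := Nat.mod_eq_of_lt (by omega)
      rw [h1]
      have h2 : p - (p - j) = j := by omega
      rw [h2, hsm]
      congr 1
      have h3 : ((-1:k))^((p - j) * (m' + 2)) = ε^(p-j) := by
        rw [hεdef, ← pow_mul]
        congr 1
        ring
      rw [h3]
      have h4 : ε^j * ε^(p-j) = 1 := by
        rw [← pow_add]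
        have : j + (p - j) = p := by omega
        rw [this]; exact hsign
      have h5 := hcoefpow j
      calc u (xsub j) = 1 * u (xsub j) := by rw [one_mul]
        _ = (ε^j * ε^(p-j)) * u (xsub j) := by rw [h4]
        _ = ε^(p-j) * (ε^j * u (xsub j)) := by ring
        _ = ε^(p-j) * u (xsub 0) := by rw [← h5]
        _ = u (xsub 0) * ε^(p-j) := by ring

end Aux7
section Aux8
open scoped Classical
variable {k : Type} [Field k] {Q : Quiv} {R : Set (Q.A × Q.A)}

lemma caseB (hgen : IsGentle Q R) {m' : ℕ} {u : Coch k Q R (m'+2)}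
    (hirr : IsIrreducibleCocycle k Q R (m'+2) u) (hrk : 1 < u.support.card)
    (hnb : ¬∃ y : Coch k Q R (m' + 1), dLin k Q R (m' + 1) y = u)
    (hall : ∀ x ∈ u.support, x.val.2.2 ≠ []) : False := by
  have hm0 : 0 < m' + 2 := by omega
  have hdu := hirr.1
  obtain ⟨x, hx⟩ : ∃ x, x ∈ u.support := by
    have : 0 < u.support.card := by omega
    obtain ⟨x, hx⟩ := Finset.card_pos.1 this
    exact ⟨x, hx⟩
  -- get a linked pair
  obtain ⟨x₀, x₁, hx₀, hx₁, y₀, hLy₀, hRy₀, hrel⟩ :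
      ∃ x₀ x₁, x₀ ∈ u.support ∧ x₁ ∈ u.support ∧ ∃ y₀ : GB Q R (m'+2+1),
        LinkL Q R (m'+2) x₀ y₀ ∧ LinkR Q R (m'+2) x₁ y₀ ∧
        u x₀ = (-1:k)^(m'+2) * u x₁ := by
    rcases not_isolated hm0 hirr hrk hx with ⟨y, hL⟩ | ⟨y, hR⟩
    · obtain ⟨x', hx', hR', hrel'⟩ := cancel_L hm0 hdu hx hL
      exact ⟨x, x', hx, hx', y, hL, hR', hrel'⟩
    · obtain ⟨x', hx', hL', hrel'⟩ := cancel_R hm0 hdu hx hR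
      exact ⟨x', x, hx', hx, y, hL', hR, hrel'⟩
  -- extract the list data
  obtain ⟨b, eb⟩ := hLy₀
  obtain ⟨a, hta, ea⟩ := hRy₀
  have hal₀ : x₀.val.2.2 ≠ [] := hall x₀ hx₀
  have hal₁ : x₁.val.2.2 ≠ [] := hall x₁ hx₁
  have hg₀ne : x₀.val.1.2 ≠ [] := gamma_ne_nil hm0 x₀
  obtain ⟨c, t, hct⟩ := List.exists_cons_of_ne_nil hg₀ne
  obtain ⟨e, s, hes⟩ := List.exists_cons_of_ne_nil hal₀
  have htne : t ≠ [] := by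
    have := x₀.2.2.1
    rw [plen, hct] at this
    intro h; rw [h] at this; simp at this
  obtain ⟨d, t', hdt⟩ := List.exists_cons_of_ne_nil htne
  have E := eb.symm.trans ea
  have E1 : x₀.val.1.2 ++ [b] = a :: x₁.val.1.2 := by
    have := congrArg (fun z => z.1.2) E; simpa [extL, extR] using this
  have E2 : x₀.val.2.2 ++ [b] = a :: x₁.val.2.2 := by
    have := congrArg (fun z => z.2.2) E; simpa [extL, extR] using this
  rw [hct] at E1
  rw [hes] at E2
  have hp1 := (List.cons.injEq c (t ++ [b]) a x₁.val.1.2) ▸ E1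
  have hac : a = c := hp1.1.symm
  have hg₁ : x₁.val.1.2 = t ++ [b] := hp1.2.symm
  have hp2 := (List.cons.injEq e (s ++ [b]) a x₁.val.2.2) ▸ E2
  have hae : a = e := hp2.1.symm
  have hal₁eq : x₁.val.2.2 = s ++ [b] := hp2.2.symm
  have hce : c = e := by rw [← hac, hae]
  -- heads of γ₀ and α₀ agree
  have hhd : x₀.val.1.2.head? = x₀.val.2.2.head? := by
    rw [hct, hes]; simp [hce]
  -- various chain facts from the validity of y₀
  have hymem := eb ▸ y₀.2
  have hychR : (x₀.val.1.2 ++ [b]).Chain' (fun a b => (a, b) ∈ R) := hymem.1.2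
  have hychC : (x₀.val.1.2 ++ [b]).Chain' (fun a b => Q.tgt a = Q.src b) := hymem.1.1.1
  have hychB : (x₀.val.2.2 ++ [b]).Chain' (fun a b => (a, b) ∉ R) := hymem.2.2.1.2
  obtain ⟨lg, hlg⟩ : ∃ lg, x₀.val.1.2.getLast? = some lg :=
    ⟨_, List.getLast?_eq_getLast_of_ne_nil hg₀ne⟩
  obtain ⟨la, hla⟩ : ∃ la, x₀.val.2.2.getLast? = some la :=
    ⟨_, List.getLast?_eq_getLast_of_ne_nil hal₀⟩
  have hlgb : Q.tgt lg = Q.src b ∧ (lg, b) ∈ R := by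
    rw [List.Chain', List.isChain_append] at hychR hychC
    exact ⟨hychC.2.2 lg hlg b rfl, hychR.2.2 lg hlg b rfl⟩
  have hlab : (la, b) ∉ R := by
    rw [List.Chain', List.isChain_append] at hychB
    exact hychB.2.2 la hla b rfl
  -- x₀ ≠ x₁
  have hne01 : x₀ ≠ x₁ := by
    intro h
    have h1 : x₀.val.1.2 = t ++ [b] := by rw [h]; exact hg₁
    have h2 : x₀.val.2.2 = s ++ [b] := by rw [h]; exact hal₁eq
    have hlgb' : lg = b := by
      rw [h1, List.getLast?_concat] at hlg; simpa using hlg.symm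
    have hlab' : la = b := by
      rw [h2, List.getLast?_concat] at hla; simpa using hla.symm
    rw [hlgb'] at hlgb; rw [hlab'] at hlab
    exact hlab hlgb.2
  -- last arrows of x₁ are both b
  have hlg₁ : x₁.val.1.2.getLast? = some b := by rw [hg₁]; exact List.getLast?_concat
  have hla₁ : x₁.val.2.2.getLast? = some b := by rw [hal₁eq]; exact List.getLast?_concat
  -- x₁ has no left extension
  have hnoL₁ : ∀ y : GB Q R (m'+2+1), LinkL Q R (m'+2) x₁ y → False := by
    intro y hL
    obtain ⟨b', eb'⟩ := hL
    have hymem' := eb' ▸ y.2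
    have hchR : (x₁.val.1.2 ++ [b']).Chain' (fun a b => (a, b) ∈ R) := hymem'.1.2
    have hchB : (x₁.val.2.2 ++ [b']).Chain' (fun a b => (a, b) ∉ R) := hymem'.2.2.1.2
    rw [List.Chain', List.isChain_append] at hchR hchB
    exact (hchB.2.2 b hla₁ b' rfl) (hchR.2.2 b hlg₁ b' rfl)
  -- closure of the pair
  set T : Finset (GB Q R (m'+2)) := {x₀, x₁} with hTdef
  have hTsub : T ⊆ u.support := by
    intro z hz
    rw [hTdef, Finset.mem_insert, Finset.mem_singleton] at hz
    rcases hz with rfl | rfl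
    · exact hx₀
    · exact hx₁
  have hclosed : ∀ z ∈ T, ∀ x' ∈ u.support, ∀ y : GB Q R (m'+2+1),
      (LinkL Q R (m'+2) z y ∧ LinkR Q R (m'+2) x' y) ∨
      (LinkL Q R (m'+2) x' y ∧ LinkR Q R (m'+2) z y) → x' ∈ T := by
    intro z hz x' hx' y hlink
    rw [hTdef, Finset.mem_insert, Finset.mem_singleton] at hz
    rw [hTdef, Finset.mem_insert, Finset.mem_singleton]
    rcases hz with rfl | rfl
    · rcases hlink with ⟨hL, hR⟩ | ⟨hL, hR⟩
      · have hyy : y = y₀ := linkL_y_unique hgen hm0 hL ⟨b, eb⟩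
        exact Or.inr (uniqR hm0 (hyy ▸ hR) ⟨a, hta, ea⟩)
      · exact absurd hR (fun h => no_pred_of_eq_heads hm0 hal₀ hhd h)
    · rcases hlink with ⟨hL, hR⟩ | ⟨hL, hR⟩
      · exact absurd hL (fun h => hnoL₁ y h)
      · have hyy : y = y₀ := linkR_y_unique hgen hm0 hR ⟨a, hta, ea⟩
        exact Or.inl (uniqL (hyy ▸ hL) ⟨b, eb⟩)
  have hsupT : T = u.support :=
    irred_closed hm0 hirr T hTsub ⟨x₀, by rw [hTdef]; simp⟩ hclosed
  -- u is the sum of the two singles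
  have husum : u = Finsupp.single x₀ (u x₀) + Finsupp.single x₁ (u x₁) := by
    conv_lhs => rw [← Finsupp.sum_single u]
    rw [Finsupp.sum, ← hsupT, hTdef, Finset.sum_pair hne01]
  -- the degree-(m'+1) preimage
  have hcompt : Q.tgt c = Q.src d := by
    have := x₀.2.1.1.1
    rw [hct, hdt] at this
    exact (List.isChain_cons_cons.1 this).1
  have hrelcd : (c, d) ∈ R := by
    have := x₀.2.1.2
    rw [hct, hdt] at this
    exact (List.isChain_cons_cons.1 this).1
  have hlgt : t.getLast? = some lg := by
    rw [hct, getLast?_cons_ne htne] at hlg; exact hlg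
  have hw₀mem : GBmem Q R (m'+1) ((Q.tgt c, t), (Q.tgt c, s)) := by
    refine ⟨⟨⟨?_, ?_⟩, ?_⟩, ?_, ⟨⟨?_, ?_⟩, ?_⟩, rfl, ?_⟩
    · show t.Chain' _
      have := x₀.2.1.1.1; rw [hct] at this; exact this.tail
    · intro a' ha'
      rw [hdt] at ha'
      have : d = a' := by simpa using ha'
      rw [← this]
      show Q.src d = Q.tgt c
      rw [hcompt]
    · show t.Chain' _
      have := x₀.2.1.2; rw [hct] at this; exact this.tail
    · show t.length = m' + 1
      have := x₀.2.2.1; rw [plen, hct] at this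
      simp only [List.length_cons] at this; omega
    · show s.Chain' _
      have := x₀.2.2.2.1.1.1; rw [hes] at this; exact this.tail
    · intro a' ha'
      obtain ⟨f, s', hfs⟩ := List.exists_cons_of_ne_nil (l := s) (by
        intro hnil; rw [hnil] at ha'; simp at ha')
      rw [hfs] at ha'
      have haf : f = a' := by simpa using ha'
      rw [← haf]
      show Q.src f = Q.tgt c
      have := x₀.2.2.2.1.1.1
      rw [hes, hfs] at this
      have h1 : Q.tgt e = Q.src f := (List.isChain_cons_cons.1 this).1
      rw [← h1, hce]
    · show s.Chain' _
      have := x₀.2.2.2.1.2; rw [hes] at this; exact this.tail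
    · show ptgt Q (Q.tgt c, t) = ptgt Q (Q.tgt c, s)
      have hpar := x₀.2.2.2.2.2
      have h1 : ptgt Q x₀.val.1 = ptgt Q ((Q.tgt c, t) : PathDat Q) := by
        rw [ptgt, ptgt, hct, getLast?_cons_ne htne]
        simp [hlgt]
      have h2 : ptgt Q x₀.val.2 = ptgt Q ((Q.tgt c, s) : PathDat Q) := by
        rcases hsnil : s with _ | ⟨f, s'⟩
        · rw [ptgt, ptgt, hes, hsnil]
          simp [hce]
        · have hls : (f :: s').getLast? = some ((f :: s').getLast (by simp)) :=
            List.getLast?_eq_getLast_of_ne_nil (by simp)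
          rw [ptgt, ptgt, hes, hsnil]
          simp [hls]
      rw [← h1, ← h2, hpar]
  set w₀ : GB Q R (m'+1) := ⟨((Q.tgt c, t), (Q.tgt c, s)), hw₀mem⟩ with hw₀
  -- identify the two extensions of w₀
  have hextL : (extL Q b (Q.tgt c, t), extL Q b (Q.tgt c, s)) = x₁.val := by
    have hx₁γ1 : x₁.val.1.1 = Q.tgt c := by
      have := fst_eq_src_head x₁.2.1.1
        (show x₁.val.1.2 = d :: (t' ++ [b]) by rw [hg₁, hdt]; rfl)
      rw [this, hcompt]
    have hx₁α1 : x₁.val.2.1 = Q.tgt c := by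
      have := x₁.2.2.2.2.1; rw [psrc, psrc] at this
      rw [← this, hx₁γ1]
    refine Prod.ext (Prod.ext ?_ ?_) (Prod.ext ?_ ?_)
    · show Q.tgt c = x₁.val.1.1; rw [hx₁γ1]
    · show t ++ [b] = x₁.val.1.2; rw [hg₁]
    · show Q.tgt c = x₁.val.2.1; rw [hx₁α1]
    · show s ++ [b] = x₁.val.2.2; rw [hal₁eq]
  have hextR : (extR Q c ((Q.tgt c, t) : PathDat Q), extR Q c ((Q.tgt c, s) : PathDat Q)) = x₀.val := by
    have hx₀γ1 : x₀.val.1.1 = Q.src c := fst_eq_src_head x₀.2.1.1 hct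
    have hx₀α1 : x₀.val.2.1 = Q.src c := by
      have := x₀.2.2.2.2.1; rw [psrc, psrc] at this
      rw [← this, hx₀γ1]
    refine Prod.ext (Prod.ext ?_ ?_) (Prod.ext ?_ ?_)
    · show Q.src c = x₀.val.1.1; rw [hx₀γ1]
    · show c :: t = x₀.val.1.2; rw [hct]
    · show Q.src c = x₀.val.2.1; rw [hx₀α1]
    · show c :: s = x₀.val.2.2; rw [hes, hce]
  -- compute dB of w₀
  have hdB : dB k Q R (m'+1) w₀ =
      Finsupp.single x₁ 1 - ((-1:k)^(m'+1)) • Finsupp.single x₀ 1 := by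
    unfold dB
    congr 1
    · rw [Finset.sum_eq_single b]
      · rw [dif_pos (hextL ▸ x₁.2)]
        congr 1
        exact Subtype.ext hextL
      · intro b' _ hb'
        rw [dif_neg]
        intro hmem'
        have hch : (t ++ [b']).Chain' (fun a b => (a, b) ∈ R) := hmem'.1.2
        have hchc : (t ++ [b']).Chain' (fun a b => Q.tgt a = Q.src b) := hmem'.1.1.1
        rw [List.Chain', List.isChain_append] at hch hchc
        have h1 : Q.tgt lg = Q.src b' ∧ (lg, b') ∈ R :=
          ⟨hchc.2.2 lg hlgt b' rfl, hch.2.2 lg hlgt b' rfl⟩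
        exact hb' (hgen.uniqRelAfter lg h1 hlgb)
      · intro hb; exact absurd (Finset.mem_univ b) hb
    · congr 1
      rw [Finset.sum_eq_single c]
      · have hcond : Q.tgt c = psrc Q w₀.val.1 ∧
            GBmem Q R (m'+1+1) (extR Q c w₀.val.1, extR Q c w₀.val.2) := by
          constructor
          · rfl
          · show GBmem Q R (m'+1+1)
                (extR Q c ((Q.tgt c, t) : PathDat Q), extR Q c ((Q.tgt c, s) : PathDat Q))
            rw [hextR]; exact x₀.2
        rw [dif_pos hcond]
        congr 1
        apply Subtype.ext
        exact hextR
      · intro a' _ ha'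
        rw [dif_neg]
        rintro ⟨-, hmem'⟩
        have hch : (a' :: t).Chain' (fun a b => (a, b) ∈ R) := hmem'.1.2
        have hchc : (a' :: t).Chain' (fun a b => Q.tgt a = Q.src b) := hmem'.1.1.1
        rw [hdt] at hch hchc
        have h1 : Q.tgt a' = Q.src d ∧ (a', d) ∈ R :=
          ⟨(List.isChain_cons_cons.1 hchc).1, (List.isChain_cons_cons.1 hch).1⟩
        exact ha' (hgen.uniqRelBefore d h1 ⟨hcompt, hrelcd⟩)
      · intro hc; exact absurd (Finset.mem_univ c) hc
  -- the coboundary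
  set c1 : k := u x₁ with hc1
  set c0 : k := u x₀ with hc0
  apply hnb
  refine ⟨Finsupp.single w₀ c1, ?_⟩
  unfold dLin
  rw [Finsupp.linearCombination_single, hdB]
  rw [husum]
  rw [smul_sub, smul_smul]
  have hs1 : c1 • Finsupp.single x₁ (1:k) = Finsupp.single x₁ c1 := by
    rw [Finsupp.smul_single, smul_eq_mul, mul_one]
  have hs2 : (c1 * (-1:k)^(m'+1)) • Finsupp.single x₀ (1:k) =
      Finsupp.single x₀ (c1 * (-1:k)^(m'+1)) := by
    rw [Finsupp.smul_single, smul_eq_mul, mul_one]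
  rw [hs1, hs2]
  have hcoef : c0 = -(c1 * (-1:k)^(m'+1)) := by
    rw [hrel]
    have : ((-1:k))^(m'+2) = -((-1:k))^(m'+1) := by
      rw [pow_succ]; ring
    rw [this]; ring
  rw [hcoef]
  rw [Finsupp.single_neg]
  abel

end Aux8
/-- Let `(Q, R)` be a gentle presentation and `m = m' + 2 ≥ 2`.
If `u` is an irreducible cocycle in `k(Γ_m ∥ B)` of rank `r > 1` that is not a
coboundary, then: (1) `m` is even or `char k = 2`; and (2) `r` divides `m` and
there is a complete cycle `C` of length `m` and period `r` such that `u` is a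
nonzero scalar multiple of `⟨C⟩`. -/
theorem irreducible_cocycles_of_rank_gt_one (k : Type) [Field k] (Q : Quiv)
    (R : Set (Q.A × Q.A)) (hg : IsGentle Q R) (m' : ℕ)
    (u : Coch k Q R (m' + 2)) (hirr : IsIrreducibleCocycle k Q R (m' + 2) u)
    (hrk : 1 < u.support.card)
    (hnb : ¬∃ y : Coch k Q R (m' + 1), dLin k Q R (m' + 1) y = u) :
    (Even (m' + 2) ∨ ringChar k = 2) ∧
    u.support.card ∣ (m' + 2) ∧
    ∃ C : PathDat Q, Complete Q R C ∧ plen Q C = m' + 2 ∧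
      periodP Q C = u.support.card ∧
      ∃ c : k, c ≠ 0 ∧ u = c • cycG k Q R (m' + 2) C := by
  by_cases hall : ∀ x ∈ u.support, x.val.2.2 ≠ []
  · exact absurd (caseB hg hirr hrk hnb hall) id
  · push_neg at hall
    obtain ⟨x₀, hx₀, htriv⟩ := hall
    exact caseA hg hirr hrk hx₀ htriv

end GentleTT
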